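/- arXiv:1407.1015 — 7 statements merged into one kernel-verified Lean document; each statement's English description precedes it below -/
import Mathlib

section
/- Let (A,0,1,∧,∨,C,S₁,S₂) be a T-structure and define a ⇒ b = b ∨ ((CS₁a ∨ S₁b) ∧ (CS₂a ∨ S₂b)) and ¬a = a ⇒ 0. Then (A,0,1,∧,∨,⇒,¬,S₁,S₂) is a HT-algebra; in particular ⇒ is the relative pseudocomplement (for all a,b,x ∈ A: a ∧ x ≤ b iff x ≤ a ⇒ b), and the equations HT2–HT7 hold. -/
/-- A T-structure: a bounded distributive lattice with unary operations
`C`, `S 0` (= S₁), `S 1` (= S₂) satisfying (T2)–(T7). -/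
structure TStructure (A : Type*) [DistribLattice A] [BoundedOrder A] where
  C : A → A
  S : Fin 2 → A → A
  /-- (T2) each Sᵢ preserves ∧ -/
  S_inf : ∀ i a b, S i (a ⊓ b) = S i a ⊓ S i b
  /-- (T2) each Sᵢ preserves ∨ -/
  S_sup : ∀ i a b, S i (a ⊔ b) = S i a ⊔ S i b
  /-- (T3) S₁a ∧ Ca = 0 -/
  S1_inf_C : ∀ a, S 0 a ⊓ C a = ⊥
  /-- (T3) S₁a ∨ Ca = 1 -/
  S1_sup_C : ∀ a, S 0 a ⊔ C a = ⊤
  /-- (T4) Sᵢ(Sⱼa) = Sⱼa -/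
  S_S : ∀ i j a, S i (S j a) = S j a
  /-- (T5) S₁0 = 0 -/
  S1_bot : S 0 ⊥ = ⊥
  /-- (T5) S₁1 = 1 -/
  S1_top : S 0 ⊤ = ⊤
  /-- (T6) determination principle -/
  determination : ∀ a b, (∀ i, S i a = S i b) → a = b
  /-- (T7) S₁a ≤ S₂a -/
  S1_le_S2 : ∀ a, S 0 a ≤ S 1 a

namespace TAux
variable {A : Type*} [DistribLattice A] [BoundedOrder A] (T : TStructure A)

lemma sMono (i : Fin 2) {a b : A} (h : a ≤ b) : T.S i a ≤ T.S i b := by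
  have h2 := T.S_sup i a b
  rw [sup_eq_right.2 h] at h2
  exact le_sup_left.trans_eq h2.symm

lemma sBot (i : Fin 2) : T.S i ⊥ = (⊥ : A) := by
  have h := T.S_S i 0 (⊥ : A)
  rwa [T.S1_bot] at h

lemma cInf (j : Fin 2) (a : A) : T.S j a ⊓ T.C (T.S j a) = ⊥ := by
  have h := T.S1_inf_C (T.S j a); rwa [T.S_S] at h

lemma cSup (j : Fin 2) (a : A) : T.S j a ⊔ T.C (T.S j a) = ⊤ := by
  have h := T.S1_sup_C (T.S j a); rwa [T.S_S] at h

lemma compl_unique {x b c : A} (h1 : x ⊓ b = ⊥) (h2 : x ⊔ b = ⊤)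
    (h3 : x ⊓ c = ⊥) (h4 : x ⊔ c = ⊤) : b = c := by
  have hb : b = b ⊓ c := by
    calc b = b ⊓ (x ⊔ c) := by rw [h4, inf_top_eq]
    _ = (b ⊓ x) ⊔ (b ⊓ c) := inf_sup_left b x c
    _ = b ⊓ c := by rw [inf_comm b x, h1, bot_sup_eq]
  have hc : c = c ⊓ b := by
    calc c = c ⊓ (x ⊔ b) := by rw [h2, inf_top_eq]
    _ = (c ⊓ x) ⊔ (c ⊓ b) := inf_sup_left c x b
    _ = c ⊓ b := by rw [inf_comm c x, h3, bot_sup_eq]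
  rw [hb, inf_comm b c, ← hc]

lemma sC (i j : Fin 2) (a : A) : T.S i (T.C (T.S j a)) = T.C (T.S j a) := by
  refine compl_unique (x := T.S j a) ?_ ?_ (cInf T j a) (cSup T j a)
  · rw [show T.S j a ⊓ T.S i (T.C (T.S j a)) = T.S i (T.S j a ⊓ T.C (T.S j a)) by
      rw [T.S_inf, T.S_S], cInf, sBot]
  · rw [show T.S j a ⊔ T.S i (T.C (T.S j a)) = T.S i (T.S j a ⊔ T.C (T.S j a)) by
      rw [T.S_sup, T.S_S], cSup]
    have h := T.S_S i 0 (⊤ : A)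
    rwa [T.S1_top] at h

lemma s0_le (a : A) : T.S 0 a ≤ a := by
  have h : T.S 0 a ⊔ a = a := by
    apply T.determination
    intro i
    rw [T.S_sup, T.S_S]
    fin_cases i
    · exact sup_idem _
    · exact sup_eq_right.2 (T.S1_le_S2 a)
  exact sup_eq_right.1 h

lemma le_s1 (a : A) : a ≤ T.S 1 a := by
  have h : a ⊓ T.S 1 a = a := by
    apply T.determination
    intro i
    rw [T.S_inf, T.S_S]
    fin_cases i
    · exact inf_eq_left.2 (T.S1_le_S2 a)
    · exact inf_idem _
  exact inf_eq_left.1 h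

lemma c2_le_c1 (a : A) : T.C (T.S 1 a) ≤ T.C (T.S 0 a) := by
  have : T.C (T.S 1 a) = (T.C (T.S 1 a) ⊓ T.S 0 a) ⊔ (T.C (T.S 1 a) ⊓ T.C (T.S 0 a)) := by
    rw [← inf_sup_left, cSup, inf_top_eq]
  rw [this]
  apply sup_le
  · have h1 : T.C (T.S 1 a) ⊓ T.S 0 a ≤ T.S 1 a ⊓ T.C (T.S 1 a) := by
      rw [inf_comm]; exact inf_le_inf (T.S1_le_S2 a) le_rfl
    rw [cInf] at h1
    exact h1.trans bot_le
  · exact inf_le_right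

end TAux

section Main
variable {A : Type*} [DistribLattice A] [BoundedOrder A] (T : TStructure A)
open TAux

lemma rpc (a b x : A) :
    a ⊓ x ≤ b ↔ x ≤ b ⊔ ((T.C (T.S 0 a) ⊔ T.S 0 b) ⊓ (T.C (T.S 1 a) ⊔ T.S 1 b)) := by
  set c1 := T.C (T.S 0 a) with hc1
  set c2 := T.C (T.S 1 a) with hc2
  set m := (c1 ⊔ T.S 0 b) ⊓ (c2 ⊔ T.S 1 b) with hm
  constructor
  · intro h
    have hp : x ≤ ((x ⊓ T.S 0 a) ⊔ c1) ⊓ ((x ⊓ T.S 1 a) ⊔ c2) := by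
      refine le_inf ?_ ?_
      · calc x = x ⊓ (T.S 0 a ⊔ c1) := by rw [hc1, cSup, inf_top_eq]
          _ = (x ⊓ T.S 0 a) ⊔ (x ⊓ c1) := inf_sup_left x _ _
          _ ≤ (x ⊓ T.S 0 a) ⊔ c1 := sup_le_sup_left inf_le_right _
      · calc x = x ⊓ (T.S 1 a ⊔ c2) := by rw [hc2, cSup, inf_top_eq]
          _ = (x ⊓ T.S 1 a) ⊔ (x ⊓ c2) := inf_sup_left x _ _
          _ ≤ (x ⊓ T.S 1 a) ⊔ c2 := sup_le_sup_left inf_le_right _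
    refine hp.trans ?_
    set p := x ⊓ T.S 0 a with hpdef
    set q := x ⊓ T.S 1 a with hqdef
    have hpb : p ≤ b := by rw [hpdef, inf_comm x (T.S 0 a)]; exact (inf_le_inf (s0_le T a) le_rfl).trans h
    have hqS : q ≤ T.S 1 b := by
      have h1 : q ≤ T.S 1 x ⊓ T.S 1 a := inf_le_inf (le_s1 T x) le_rfl
      rw [← T.S_inf] at h1
      refine h1.trans (sMono T 1 ?_)
      rw [inf_comm]; exact h
    calc (p ⊔ c1) ⊓ (q ⊔ c2)
        = ((p ⊓ q) ⊔ (c1 ⊓ q)) ⊔ ((p ⊓ c2) ⊔ (c1 ⊓ c2)) := by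
          rw [inf_sup_left, inf_sup_right, inf_sup_right]
      _ ≤ b ⊔ m := by
          refine sup_le (sup_le ?_ ?_) (sup_le ?_ ?_)
          · exact le_sup_of_le_left ((inf_le_left).trans hpb)
          · refine le_sup_of_le_right ?_
            refine le_inf ?_ ?_
            · exact le_sup_of_le_left inf_le_left
            · exact le_sup_of_le_right ((inf_le_right).trans hqS)
          · exact le_sup_of_le_left ((inf_le_left).trans hpb)
          · refine le_sup_of_le_right (le_inf ?_ ?_)
            · exact le_sup_of_le_left inf_le_left
            · exact le_sup_of_le_left inf_le_right
  · intro h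
    set t := a ⊓ ((c1 ⊔ T.S 0 b) ⊓ (c2 ⊔ T.S 1 b)) with htdef
    have hSt : ∀ i, T.S i t ≤ T.S i b := by
      intro i
      fin_cases i
      · show T.S 0 t ≤ T.S 0 b
        have he : T.S 0 t = T.S 0 a ⊓ ((c1 ⊔ T.S 0 b) ⊓ (c2 ⊔ T.S 1 b)) := by
          rw [htdef, hc1, hc2]
          simp only [T.S_inf, T.S_sup, T.S_S, sC]
        rw [he]
        have : T.S 0 a ⊓ (c1 ⊔ T.S 0 b) ≤ T.S 0 b := by
          rw [inf_sup_left, hc1, cInf, bot_sup_eq]; exact inf_le_right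
        calc T.S 0 a ⊓ ((c1 ⊔ T.S 0 b) ⊓ (c2 ⊔ T.S 1 b))
            ≤ T.S 0 a ⊓ (c1 ⊔ T.S 0 b) := inf_le_inf le_rfl inf_le_left
          _ ≤ T.S 0 b := this
      · show T.S 1 t ≤ T.S 1 b
        have he : T.S 1 t = T.S 1 a ⊓ ((c1 ⊔ T.S 0 b) ⊓ (c2 ⊔ T.S 1 b)) := by
          rw [htdef, hc1, hc2]
          simp only [T.S_inf, T.S_sup, T.S_S, sC]
        rw [he]
        have : T.S 1 a ⊓ (c2 ⊔ T.S 1 b) ≤ T.S 1 b := by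
          rw [inf_sup_left, hc2, cInf, bot_sup_eq]; exact inf_le_right
        calc T.S 1 a ⊓ ((c1 ⊔ T.S 0 b) ⊓ (c2 ⊔ T.S 1 b))
            ≤ T.S 1 a ⊓ (c2 ⊔ T.S 1 b) := inf_le_inf le_rfl inf_le_right
          _ ≤ T.S 1 b := this
    have ht : t ≤ b := by
      have heq : t ⊓ b = t := by
        apply T.determination
        intro i
        rw [T.S_inf]
        exact inf_eq_left.2 (hSt i)
      exact inf_eq_left.1 heq
    have key : a ⊓ (b ⊔ m) ≤ b := by
      rw [inf_sup_left]
      exact sup_le inf_le_right ht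
    exact (inf_le_inf le_rfl h).trans key

end Main

/-- Theorem 3.1: defining a ⇒ b = b ∨ ((CS₁a ∨ S₁b) ∧ (CS₂a ∨ S₂b)) and ¬a = a ⇒ 0
on a T-structure yields a HT-algebra: ⇒ is the relative pseudocomplement and
the equations (HT2)–(HT7) hold. -/
theorem stmt_4 {A : Type*} [DistribLattice A] [BoundedOrder A]
    (T : TStructure A) (imp : A → A → A) (neg : A → A)
    (himp : ∀ a b, imp a b =
      b ⊔ ((T.C (T.S 0 a) ⊔ T.S 0 b) ⊓ (T.C (T.S 1 a) ⊔ T.S 1 b)))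
    (hneg : ∀ a, neg a = imp a ⊥) :
    -- (HT1) ⇒ is the relative pseudocomplement
    (∀ a b x, a ⊓ x ≤ b ↔ x ≤ imp a b) ∧
    -- (HT2)
    (∀ i a b, T.S i (a ⊓ b) = T.S i a ⊓ T.S i b) ∧
    (∀ i a b, T.S i (a ⊔ b) = T.S i a ⊔ T.S i b) ∧
    -- (HT3)
    (∀ a b, T.S 1 (imp a b) = imp (T.S 1 a) (T.S 1 b)) ∧
    -- (HT4)
    (∀ a b, T.S 0 (imp a b) = imp (T.S 0 a) (T.S 0 b) ⊓ imp (T.S 1 a) (T.S 1 b)) ∧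
    -- (HT5)
    (∀ i j a, T.S i (T.S j a) = T.S j a) ∧
    -- (HT6)
    (∀ a, T.S 0 a ⊔ a = a) ∧
    -- (HT7)
    (∀ a, T.S 0 a ⊔ neg (T.S 0 a) = ⊤) := by
  open TAux in
  refine ⟨?_, T.S_inf, T.S_sup, ?_, ?_, T.S_S, fun a => sup_eq_right.2 (s0_le T a), ?_⟩
  · intro a b x
    rw [himp]
    exact rpc T a b x
  · -- HT3
    intro a b
    rw [himp, himp]
    simp only [T.S_sup, T.S_inf, T.S_S, sC, inf_idem]
    set c1 := T.C (T.S 0 a)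
    set c2 := T.C (T.S 1 a)
    apply le_antisymm
    · exact sup_le le_sup_left (inf_le_right.trans le_sup_right)
    · refine sup_le le_sup_left (sup_le ?_ le_sup_left)
      refine le_sup_of_le_right (le_inf ?_ le_sup_left)
      exact le_sup_of_le_left (c2_le_c1 T a)
  · -- HT4
    intro a b
    rw [himp, himp, himp]
    simp only [T.S_sup, T.S_inf, T.S_S, sC, inf_idem]
    set c1 := T.C (T.S 0 a)
    set c2 := T.C (T.S 1 a)
    rw [sup_eq_right.2 (le_sup_right : T.S 0 b ≤ c1 ⊔ T.S 0 b),
        sup_eq_right.2 (le_sup_right : T.S 1 b ≤ c2 ⊔ T.S 1 b)]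
    apply sup_eq_right.2
    exact le_inf le_sup_right (le_sup_of_le_right (T.S1_le_S2 b))
  · -- HT7
    intro a
    rw [hneg, himp]
    simp only [T.S_S, T.S1_bot, sBot, sup_bot_eq, bot_sup_eq, inf_idem]
    have h := T.S1_sup_C (T.S 0 a)
    rwa [T.S_S] at h
end

section
/- Let (A,0,1,∧,∨,⇒,¬,S₁,S₂) be a HT-algebra and define Ca = ¬S₁a for all a ∈ A. Then (A,0,1,∧,∨,C,S₁,S₂) is a T-structure; in particular the determination principle holds: if S₁a = S₁b and S₂a = S₂b then a = b. -/
/-- A HT-algebra: a Heyting algebra with unary operations `S 0` (= S₁), `S 1` (= S₂)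
satisfying (HT2)–(HT7).  (Note: in a Heyting algebra, ¬a = a ⇨ ⊥ = aᶜ.) -/
structure HTAlgebra (A : Type*) [HeytingAlgebra A] where
  S : Fin 2 → A → A
  /-- (HT2) each Sᵢ preserves ∧ -/
  S_inf : ∀ i a b, S i (a ⊓ b) = S i a ⊓ S i b
  /-- (HT2) each Sᵢ preserves ∨ -/
  S_sup : ∀ i a b, S i (a ⊔ b) = S i a ⊔ S i b
  /-- (HT3) S₂(a ⇒ b) = S₂a ⇒ S₂b -/
  S2_himp : ∀ a b, S 1 (a ⇨ b) = S 1 a ⇨ S 1 b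
  /-- (HT4) S₁(a ⇒ b) = (S₁a ⇒ S₁b) ∧ (S₂a ⇒ S₂b) -/
  S1_himp : ∀ a b, S 0 (a ⇨ b) = (S 0 a ⇨ S 0 b) ⊓ (S 1 a ⇨ S 1 b)
  /-- (HT5) SᵢSⱼa = Sⱼa -/
  S_S : ∀ i j a, S i (S j a) = S j a
  /-- (HT6) S₁a ∨ a = a -/
  S1_sup_self : ∀ a, S 0 a ⊔ a = a
  /-- (HT7) S₁a ∨ ¬S₁a = 1 -/
  S1_lem : ∀ a, S 0 a ⊔ (S 0 a)ᶜ = ⊤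

theorem HTAlgebra.S_mono {A : Type*} [HeytingAlgebra A] (H : HTAlgebra A)
    (i : Fin 2) {a b : A} (h : a ≤ b) : H.S i a ≤ H.S i b := by
  have : H.S i a ⊔ H.S i b = H.S i b := by
    rw [← H.S_sup, sup_eq_right.mpr h]
  exact le_of_sup_eq this

theorem HTAlgebra.S1_le {A : Type*} [HeytingAlgebra A] (H : HTAlgebra A) (a : A) :
    H.S 0 a ≤ a := le_of_sup_eq (H.S1_sup_self a)

/-- Theorem 3.2: defining Ca = ¬S₁a on a HT-algebra yields a T-structure,
i.e. (T2)–(T7) hold; in particular the determination principle (T6). -/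
theorem stmt_5 {A : Type*} [HeytingAlgebra A]
    (H : HTAlgebra A) (C : A → A) (hC : ∀ a, C a = (H.S 0 a)ᶜ) :
    -- (T2)
    (∀ i a b, H.S i (a ⊓ b) = H.S i a ⊓ H.S i b) ∧
    (∀ i a b, H.S i (a ⊔ b) = H.S i a ⊔ H.S i b) ∧
    -- (T3)
    (∀ a, H.S 0 a ⊓ C a = ⊥) ∧
    (∀ a, H.S 0 a ⊔ C a = ⊤) ∧
    -- (T4)
    (∀ i j a, H.S i (H.S j a) = H.S j a) ∧
    -- (T5)
    (H.S 0 ⊥ = ⊥) ∧ (H.S 0 ⊤ = ⊤) ∧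
    -- (T6) determination principle
    (∀ a b, (∀ i, H.S i a = H.S i b) → a = b) ∧
    -- (T7)
    (∀ a, H.S 0 a ≤ H.S 1 a) := by
  have hle : ∀ a b : A, (∀ i, H.S i a = H.S i b) → a ≤ b := by
    intro a b h
    have h1 : H.S 0 (a ⇨ b) = ⊤ := by
      rw [H.S1_himp, h 0, h 1, himp_self, himp_self, inf_top_eq]
    have := H.S1_le (a ⇨ b)
    rw [h1] at this
    exact himp_eq_top_iff.mp (top_le_iff.mp this)
  refine ⟨H.S_inf, H.S_sup, ?_, ?_, H.S_S, ?_, ?_, ?_, ?_⟩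
  · intro a; rw [hC]; exact inf_compl_self _
  · intro a; rw [hC]; exact H.S1_lem a
  · exact le_bot_iff.mp (H.S1_le ⊥)
  · have := H.S1_himp ⊤ ⊤
    simpa [himp_self] using this
  · intro a b h
    exact le_antisymm (hle a b h) (hle b a fun i => (h i).symm)
  · intro a
    have := H.S_mono 1 (H.S1_le a)
    rwa [H.S_S 1 0 a] at this
end

section
/- Every HT-algebra satisfies the Ivo Thomas axiom: for all a,b,c ∈ A, ((a ⇒ c) ⇒ b) ⇒ (((b ⇒ a) ⇒ b) ⇒ b) = 1. -/
/-- Every HT-algebra satisfies the Ivo Thomas axiom: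
((a ⇒ c) ⇒ b) ⇒ (((b ⇒ a) ⇒ b) ⇒ b) = 1. -/
theorem stmt_6 {A : Type*} [HeytingAlgebra A] (_H : HTAlgebra A) (a b c : A) :
    ((a ⇨ c) ⇨ b) ⇨ (((b ⇨ a) ⇨ b) ⇨ b) = ⊤ := by
  set X := (a ⇨ c) ⇨ b with hX
  set Y := (b ⇨ a) ⇨ b with hY
  -- splitting along a complemented element
  have split : ∀ (z w v : A), w ⊔ wᶜ = ⊤ → z ⊓ w ≤ v → z ⊓ wᶜ ≤ v → z ≤ v := by
    intro z w v htop h1 h2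
    calc z = z ⊓ (w ⊔ wᶜ) := by rw [htop, inf_top_eq]
      _ = z ⊓ w ⊔ z ⊓ wᶜ := inf_sup_left z w wᶜ
      _ ≤ v := sup_le h1 h2
  -- S₁ x ≤ x
  have sle : ∀ x : A, _H.S 0 x ≤ x := fun x => sup_eq_right.mp (_H.S1_sup_self x)
  -- compl is below any himp
  have cle : ∀ x y : A, xᶜ ≤ x ⇨ y := by
    intro x y
    rw [← himp_bot]
    exact himp_le_himp_left bot_le
  -- S₂ is monotone
  have tmono : ∀ x y : A, x ≤ y → _H.S 1 x ≤ _H.S 1 y := by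
    intro x y h
    have h2 : _H.S 1 (x ⊔ y) = _H.S 1 x ⊔ _H.S 1 y := _H.S_sup 1 x y
    rw [sup_eq_right.mpr h] at h2
    exact sup_eq_right.mp h2.symm
  -- x ≤ S₂ x
  have aleta : ∀ x : A, x ≤ _H.S 1 x := by
    intro x
    have hkey : _H.S 0 x ⇨ _H.S 1 x ≤ x ⇨ _H.S 1 x := by
      have h1 : _H.S 0 (x ⇨ _H.S 1 x)
          = (_H.S 0 x ⇨ _H.S 0 (_H.S 1 x)) ⊓ (_H.S 1 x ⇨ _H.S 1 (_H.S 1 x)) :=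
        _H.S1_himp x (_H.S 1 x)
      rw [_H.S_S 0 1 x, _H.S_S 1 1 x, himp_self, inf_top_eq] at h1
      calc _H.S 0 x ⇨ _H.S 1 x = _H.S 0 (x ⇨ _H.S 1 x) := h1.symm
        _ ≤ x ⇨ _H.S 1 x := sle _
    refine split x (_H.S 0 x) _ (_H.S1_lem x) ?_ ?_
    · have h1 : _H.S 1 (_H.S 0 x) ≤ _H.S 1 x := tmono _ _ (sle x)
      rw [_H.S_S 1 0 x] at h1
      exact inf_le_right.trans h1
    · have h2 : x ⊓ (_H.S 0 x)ᶜ ≤ x ⊓ (x ⇨ _H.S 1 x) :=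
        inf_le_inf_left x ((cle _ _).trans hkey)
      exact h2.trans inf_himp_le
  -- S₂ a is complemented
  have hta : _H.S 1 a ⊔ (_H.S 1 a)ᶜ = ⊤ := by
    have := _H.S1_lem (_H.S 1 a)
    rwa [_H.S_S 0 1 a] at this
  -- key HT inequality: (S₁b)ᶜ ⊓ S₂a ≤ b ⇨ a
  have keyL : (_H.S 0 b)ᶜ ⊓ _H.S 1 a ≤ b ⇨ a := by
    have h1 : (_H.S 0 b ⇨ _H.S 0 a) ⊓ (_H.S 1 b ⇨ _H.S 1 a) ≤ b ⇨ a := by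
      have := _H.S1_himp b a
      calc (_H.S 0 b ⇨ _H.S 0 a) ⊓ (_H.S 1 b ⇨ _H.S 1 a) = _H.S 0 (b ⇨ a) := this.symm
        _ ≤ b ⇨ a := sle _
    exact (inf_le_inf (cle _ _) le_himp).trans h1
  -- main inequality
  have main : X ⊓ Y ≤ b := by
    refine split _ (_H.S 0 b) _ (_H.S1_lem b) (inf_le_right.trans (sle b)) ?_
    refine split _ (_H.S 0 a) _ (_H.S1_lem a) ?_ ?_
    · -- S₁a holds: then a holds, so b ⇨ a holds, so Y gives b
      have h1 : X ⊓ Y ⊓ (_H.S 0 b)ᶜ ⊓ _H.S 0 a ≤ Y ⊓ (b ⇨ a) :=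
        inf_le_inf (inf_le_left.trans inf_le_right) ((sle a).trans le_himp)
      exact h1.trans himp_inf_le
    · refine split _ (_H.S 1 a) _ hta ?_ ?_
      · -- (S₁b)ᶜ and S₂a: key lemma gives b ⇨ a, so Y gives b
        have h1 : X ⊓ Y ⊓ (_H.S 0 b)ᶜ ⊓ (_H.S 0 a)ᶜ ⊓ _H.S 1 a ≤ Y ⊓ (b ⇨ a) := by
          refine le_inf ?_ ?_
          · exact inf_le_left.trans (inf_le_left.trans (inf_le_left.trans inf_le_right))
          · refine le_trans (le_inf ?_ inf_le_right) keyL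
            exact inf_le_left.trans (inf_le_left.trans inf_le_right)
        exact h1.trans himp_inf_le
      · -- (S₂a)ᶜ: then aᶜ, so a ⇨ c, so X gives b
        have h2 : (_H.S 1 a)ᶜ ≤ a ⇨ c := by
          have := compl_le_compl (aleta a)
          exact this.trans (cle a c)
        have h1 : X ⊓ Y ⊓ (_H.S 0 b)ᶜ ⊓ (_H.S 0 a)ᶜ ⊓ (_H.S 1 a)ᶜ ≤ X ⊓ (a ⇨ c) :=
          inf_le_inf
            (inf_le_left.trans (inf_le_left.trans inf_le_left)) h2
        exact h1.trans himp_inf_le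
  rw [himp_eq_top_iff, le_himp_iff]
  exact main
end

section
/- Let K = (W,R,s₁,s₂) be a HT-frame and let RC be the collection of all R-closed subsets of W, with operations ∩, ∪, SᵢX = s_i^{-1}(X), and CX = W \ S₁X. Then (RC, ∅, W, ∩, ∪, C, S₁, S₂) is a T-structure; in particular the determination principle holds: if for R-closed sets X,Y one has SᵢX = SᵢY for i = 1,2, then X = Y. -/
/-- A HT-frame on a (nonempty) set of states `W`: a preorder `R` together with
functions `s 0` (= s₁), `s 1` (= s₂) satisfying (K1)–(K6). -/
structure HTFrame (W : Type*) where
  R : W → W → Prop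
  s : Fin 2 → W → W
  /-- (K1) R is reflexive -/
  refl : ∀ w, R w w
  /-- (K1) R is transitive -/
  trans : ∀ w w' w'', R w w' → R w' w'' → R w w''
  /-- (K2) sⱼ(sᵢ(w)) = sⱼ(w) -/
  s_s : ∀ i j w, s j (s i w) = s j w
  /-- (K3) R(s₁(w), w) -/
  K3 : ∀ w, R (s 0 w) w
  /-- (K4) R(w, s₂(w)) -/
  K4 : ∀ w, R w (s 1 w)
  /-- (K5) R(w,w') implies R(sᵢ(w),sᵢ(w')) and R(sᵢ(w'),sᵢ(w)) -/
  K5 : ∀ i w w', R w w' → R (s i w) (s i w') ∧ R (s i w') (s i w)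
  /-- (K6) every state is in the image of some sᵢ -/
  K6 : ∀ w, ∃ (i : Fin 2) (w' : W), w = s i w'

/-- A subset X ⊆ W is R-closed if w ∈ X and R(w,w') imply w' ∈ X. -/
def RClosed {W : Type*} (K : HTFrame W) (X : Set W) : Prop :=
  ∀ w w', w ∈ X → K.R w w' → w' ∈ X

/-- The collection RC of R-closed subsets of W, with ∅, W, ∩, ∪,
SᵢX = sᵢ⁻¹(X) and CX = W \ S₁X, is a T-structure: RC is closed under all the
operations and (T2)–(T7) hold; in particular the determination principle (T6). -/
theorem stmt_10 {W : Type*} [Nonempty W] (K : HTFrame W) :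
    -- (T1) RC contains ∅ and W and is closed under ∩, ∪ and the unary operations
    RClosed K (∅ : Set W) ∧ RClosed K (Set.univ : Set W) ∧
    (∀ X Y, RClosed K X → RClosed K Y → RClosed K (X ∩ Y)) ∧
    (∀ X Y, RClosed K X → RClosed K Y → RClosed K (X ∪ Y)) ∧
    (∀ X, RClosed K X → ∀ i : Fin 2, RClosed K (K.s i ⁻¹' X)) ∧
    (∀ X, RClosed K X → RClosed K (K.s 0 ⁻¹' X)ᶜ) ∧
    -- (T2)
    (∀ X Y, RClosed K X → RClosed K Y → ∀ i : Fin 2,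
      K.s i ⁻¹' (X ∩ Y) = (K.s i ⁻¹' X) ∩ (K.s i ⁻¹' Y)) ∧
    (∀ X Y, RClosed K X → RClosed K Y → ∀ i : Fin 2,
      K.s i ⁻¹' (X ∪ Y) = (K.s i ⁻¹' X) ∪ (K.s i ⁻¹' Y)) ∧
    -- (T3)
    (∀ X, RClosed K X → (K.s 0 ⁻¹' X) ∩ (K.s 0 ⁻¹' X)ᶜ = ∅) ∧
    (∀ X, RClosed K X → (K.s 0 ⁻¹' X) ∪ (K.s 0 ⁻¹' X)ᶜ = Set.univ) ∧
    -- (T4)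
    (∀ X, RClosed K X → ∀ i j : Fin 2,
      K.s i ⁻¹' (K.s j ⁻¹' X) = K.s j ⁻¹' X) ∧
    -- (T5)
    (K.s 0 ⁻¹' (∅ : Set W) = ∅) ∧ (K.s 0 ⁻¹' (Set.univ : Set W) = Set.univ) ∧
    -- (T6) determination principle
    (∀ X Y, RClosed K X → RClosed K Y →
      (∀ i : Fin 2, K.s i ⁻¹' X = K.s i ⁻¹' Y) → X = Y) ∧
    -- (T7)
    (∀ X, RClosed K X → K.s 0 ⁻¹' X ⊆ K.s 1 ⁻¹' X) := by

  refine ⟨?_, ?_, ?_, ?_, ?_, ?_, ?_, ?_, ?_, ?_, ?_, ?_, ?_, ?_, ?_⟩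
  · intro w w' hw _; exact hw
  · intro w w' _ _; trivial
  · intro X Y hX hY w w' hw h; exact ⟨hX w w' hw.1 h, hY w w' hw.2 h⟩
  · intro X Y hX hY w w' hw h
    cases hw with
    | inl h1 => exact Or.inl (hX w w' h1 h)
    | inr h1 => exact Or.inr (hY w w' h1 h)
  · intro X hX i w w' hw h
    exact hX _ _ hw (K.K5 i w w' h).1
  · intro X hX w w' hw h hw'
    exact hw (hX _ _ hw' (K.K5 0 w w' h).2)
  · intro X Y _ _ i; rfl
  · intro X Y _ _ i; rfl
  · intro X _; exact Set.inter_compl_self _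
  · intro X _; exact Set.union_compl_self _
  · intro X _ i j; ext w; simp [Set.mem_preimage, K.s_s]
  · rfl
  · rfl
  · intro X Y hX hY h
    ext w
    constructor
    · intro hw
      obtain ⟨i, w', rfl⟩ := K.K6 w
      have : w' ∈ K.s i ⁻¹' Y := (h i) ▸ hw
      exact this
    · intro hw
      obtain ⟨i, w', rfl⟩ := K.K6 w
      have : w' ∈ K.s i ⁻¹' X := (h i) ▸ hw
      exact this
  · intro X hX w hw
    exact hX _ _ hw (K.trans _ _ _ (K.K3 w) (K.K4 w))
end

section
/- Let A be a HT-algebra, W the set of all prime filters of A, R the inclusion relation ⊆ on W, and sᵢ(P) = {x ∈ A : Sᵢx ∈ P} for i = 1,2. Then the system K = (W,R,s₁,s₂) is a HT-frame, i.e. it satisfies conditions (K1)–(K6). -/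
/-- A prime filter of a lattice: a proper nonempty upward-closed subset closed
under ∧ such that a ∨ b ∈ P implies a ∈ P or b ∈ P. -/
def IsPrimeFilter {A : Type*} [Lattice A] (P : Set A) : Prop :=
  P.Nonempty ∧ P ≠ Set.univ ∧
  (∀ a b, a ∈ P → a ≤ b → b ∈ P) ∧
  (∀ a b, a ∈ P → b ∈ P → a ⊓ b ∈ P) ∧
  (∀ a b, a ⊔ b ∈ P → a ∈ P ∨ b ∈ P)


section Aux
variable {A : Type*} [HeytingAlgebra A] (H : HTAlgebra A)

lemma HT_mono (i : Fin 2) {a b : A} (h : a ≤ b) : H.S i a ≤ H.S i b := by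
  have : H.S i a = H.S i (a ⊓ b) := by rw [inf_eq_left.mpr h]
  rw [this, H.S_inf]; exact inf_le_right

lemma HT_S1_le (a : A) : H.S 0 a ≤ a := sup_eq_right.mp (H.S1_sup_self a)

lemma HT_S1_bot : H.S 0 (⊥ : A) = ⊥ := le_antisymm (HT_S1_le H ⊥) bot_le

lemma HT_S_top (i : Fin 2) : H.S i (⊤ : A) = ⊤ := by
  have h2 : H.S 1 (⊤ : A) = ⊤ := by
    have := H.S2_himp (⊤ : A) ⊤
    rw [himp_self, himp_self] at this
    exact this
  calc H.S i (⊤ : A) = H.S i (H.S 1 ⊤) := by rw [h2]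
    _ = H.S 1 ⊤ := H.S_S i 1 ⊤
    _ = ⊤ := h2

lemma HT_le_S2 (a : A) : a ≤ H.S 1 a := by
  have h1 : H.S 0 a ≤ H.S 1 a := by
    calc H.S 0 a = H.S 1 (H.S 0 a) := (H.S_S 1 0 a).symm
      _ ≤ H.S 1 a := HT_mono H 1 (HT_S1_le H a)
  have hc : H.S 0 (a ⇨ H.S 1 a) = ⊤ := by
    rw [H.S1_himp, H.S_S 0 1, H.S_S 1 1, himp_self, inf_top_eq,
      himp_eq_top_iff]
    exact h1
  have := HT_S1_le H (a ⇨ H.S 1 a)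
  rw [hc, top_le_iff] at this
  exact himp_eq_top_iff.mp this

/-- key: S₂a ⊓ (x ⊓ ¬S₁x) ≤ a -/
lemma HT_key (a x : A) : H.S 1 a ⊓ (x ⊓ (H.S 0 x)ᶜ) ≤ a := by
  set y := x ⊓ (H.S 0 x)ᶜ with hy
  have hSy : H.S 0 y = ⊥ := by
    have h1 : H.S 0 ((H.S 0 x)ᶜ) ≤ (H.S 0 x)ᶜ := by
      rw [← himp_bot, H.S1_himp, H.S_S 0 0]
      exact le_trans inf_le_left (himp_le_himp_left (HT_S1_le H ⊥))
    have : H.S 0 y ≤ H.S 0 x ⊓ (H.S 0 x)ᶜ := by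
      rw [hy, H.S_inf]
      exact inf_le_inf_left _ h1
    rw [inf_compl_eq_bot] at this
    exact le_antisymm this bot_le
  have hSz : H.S 1 (H.S 1 a ⇨ a) = ⊤ := by
    rw [H.S2_himp, H.S_S 1 1, himp_self]
  have hw : H.S 0 (y ⇨ (H.S 1 a ⇨ a)) = ⊤ := by
    rw [H.S1_himp, hSy, hSz, bot_himp, himp_top, inf_top_eq]
  have hyz : y ≤ H.S 1 a ⇨ a := by
    have := HT_S1_le H (y ⇨ (H.S 1 a ⇨ a))
    rw [hw, top_le_iff] at this
    exact himp_eq_top_iff.mp this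
  calc H.S 1 a ⊓ y ≤ H.S 1 a ⊓ (H.S 1 a ⇨ a) := inf_le_inf_left _ hyz
    _ ≤ a := inf_himp_le

lemma HT_top_mem {P : Set A} (hP : IsPrimeFilter P) : (⊤ : A) ∈ P := by
  obtain ⟨⟨a, ha⟩, _, hup, _, _⟩ := hP
  exact hup a ⊤ ha le_top

lemma HT_bot_not_mem {P : Set A} (hP : IsPrimeFilter P) : (⊥ : A) ∉ P := by
  obtain ⟨_, hne, hup, _, _⟩ := hP
  intro hb
  exact hne (Set.eq_univ_of_forall fun x => hup ⊥ x hb bot_le)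
end Aux

/-- The canonical frame of a HT-algebra: W = prime filters of A, R = ⊆,
sᵢ(P) = {x : Sᵢx ∈ P}.  It is a HT-frame: s₁, s₂ map W into W and
conditions (K1)–(K6) hold. -/
theorem stmt_14 {A : Type*} [HeytingAlgebra A] (H : HTAlgebra A) :
    -- (K0) s₁, s₂ are functions on W
    (∀ P : Set A, IsPrimeFilter P → ∀ i : Fin 2, IsPrimeFilter {x | H.S i x ∈ P}) ∧
    -- (K1) ⊆ is reflexive and transitive on W
    (∀ P : Set A, IsPrimeFilter P → P ⊆ P) ∧
    (∀ P Q T : Set A, IsPrimeFilter P → IsPrimeFilter Q → IsPrimeFilter T →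
      P ⊆ Q → Q ⊆ T → P ⊆ T) ∧
    -- (K2) sⱼ(sᵢ(P)) = sⱼ(P)
    (∀ P : Set A, IsPrimeFilter P → ∀ i j : Fin 2,
      {x | H.S j x ∈ {y | H.S i y ∈ P}} = {x | H.S j x ∈ P}) ∧
    -- (K3) s₁(P) ⊆ P
    (∀ P : Set A, IsPrimeFilter P → {x | H.S 0 x ∈ P} ⊆ P) ∧
    -- (K4) P ⊆ s₂(P)
    (∀ P : Set A, IsPrimeFilter P → P ⊆ {x | H.S 1 x ∈ P}) ∧
    -- (K5) P ⊆ Q implies sᵢ(P) ⊆ sᵢ(Q) and sᵢ(Q) ⊆ sᵢ(P)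
    (∀ P Q : Set A, IsPrimeFilter P → IsPrimeFilter Q → P ⊆ Q → ∀ i : Fin 2,
      {x | H.S i x ∈ P} ⊆ {x | H.S i x ∈ Q} ∧
      {x | H.S i x ∈ Q} ⊆ {x | H.S i x ∈ P}) ∧
    -- (K6) every P ∈ W is sᵢ(Q) for some i and some Q ∈ W
    (∀ P : Set A, IsPrimeFilter P → ∃ (i : Fin 2) (Q : Set A),
      IsPrimeFilter Q ∧ P = {x | H.S i x ∈ Q}) := by
  obtain _ := trivial
  have hK0 : ∀ P : Set A, IsPrimeFilter P → ∀ i : Fin 2,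
      IsPrimeFilter {x | H.S i x ∈ P} := by
    intro P hP i
    obtain ⟨hne, hproper, hup, hinf, hprime⟩ := hP
    refine ⟨⟨⊤, ?_⟩, ?_, ?_, ?_, ?_⟩
    · show H.S i ⊤ ∈ P
      rw [HT_S_top]
      exact HT_top_mem ⟨hne, hproper, hup, hinf, hprime⟩
    · intro h
      have hb : H.S i ⊥ ∈ P := by
        have : (⊥ : A) ∈ {x | H.S i x ∈ P} := h ▸ Set.mem_univ _
        exact this
      have : H.S i ⊥ = ⊥ := by
        calc H.S i ⊥ = H.S i (H.S 0 ⊥) := by rw [HT_S1_bot]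
          _ = H.S 0 ⊥ := H.S_S i 0 ⊥
          _ = ⊥ := HT_S1_bot H
      rw [this] at hb
      exact HT_bot_not_mem ⟨hne, hproper, hup, hinf, hprime⟩ hb
    · intro a b ha hab
      exact hup _ _ ha (HT_mono H i hab)
    · intro a b ha hb
      show H.S i (a ⊓ b) ∈ P
      rw [H.S_inf]
      exact hinf _ _ ha hb
    · intro a b hab
      have : H.S i (a ⊔ b) ∈ P := hab
      rw [H.S_sup] at this
      exact hprime _ _ this
  refine ⟨hK0, fun P _ => subset_rfl, fun P Q T _ _ _ h1 h2 => h1.trans h2,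
    ?_, ?_, ?_, ?_, ?_⟩
  · -- K2
    intro P _ i j
    ext x
    show H.S i (H.S j x) ∈ P ↔ H.S j x ∈ P
    rw [H.S_S]
  · -- K3
    intro P hP x hx
    exact hP.2.2.1 _ _ hx (HT_S1_le H x)
  · -- K4
    intro P hP x hx
    exact hP.2.2.1 _ _ hx (HT_le_S2 H x)
  · -- K5
    intro P Q hP hQ hPQ i
    constructor
    · intro x hx
      exact hPQ hx
    · intro x hx
      have hlem : H.S i x ⊔ (H.S i x)ᶜ = ⊤ := by
        have := H.S1_lem (H.S i x)
        rwa [H.S_S 0 i] at this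
      have htop : H.S i x ⊔ (H.S i x)ᶜ ∈ P := hlem ▸ HT_top_mem hP
      rcases hP.2.2.2.2 _ _ htop with h | h
      · exact h
      · exfalso
        have : H.S i x ⊓ (H.S i x)ᶜ ∈ Q := hQ.2.2.2.1 _ _ hx (hPQ h)
        rw [inf_compl_eq_bot] at this
        exact HT_bot_not_mem hQ this
  · -- K6
    intro P hP
    by_cases h : ∀ x ∈ P, H.S 0 x ∈ P
    · refine ⟨0, P, hP, ?_⟩
      ext x
      exact ⟨fun hx => h x hx, fun hx => hP.2.2.1 _ _ hx (HT_S1_le H x)⟩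
    · push_neg at h
      obtain ⟨x, hxP, hxS⟩ := h
      refine ⟨1, P, hP, ?_⟩
      ext a
      constructor
      · intro ha
        exact hP.2.2.1 _ _ ha (HT_le_S2 H a)
      · intro ha
        have hcompl : (H.S 0 x)ᶜ ∈ P := by
          have htop : H.S 0 x ⊔ (H.S 0 x)ᶜ ∈ P := (H.S1_lem x) ▸ HT_top_mem hP
          rcases hP.2.2.2.2 _ _ htop with h' | h'
          · exact absurd h' hxS
          · exact h'
        have hmem : H.S 1 a ⊓ (x ⊓ (H.S 0 x)ᶜ) ∈ P :=
          hP.2.2.2.1 _ _ ha (hP.2.2.2.1 _ _ hxP hcompl)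
        exact hP.2.2.1 _ _ hmem (HT_key H a x)
end

section
/- For every set of formulas Γ and every formula α: α is a relational HT-consequence of Γ if and only if α is an algebraic consequence of Γ (Γ ⊨_Rel α iff Γ ⊨_Alg α). -/
/-- Formulas: propositional variables (indexed by ℕ) combined with
∧, ∨, ⇒, ¬ and the unary connectives S₁ (= S 0), S₂ (= S 1). -/
inductive Fml : Type
  | var : ℕ → Fml
  | and : Fml → Fml → Fml
  | or : Fml → Fml → Fml
  | imp : Fml → Fml → Fml
  | neg : Fml → Fml
  | S : Fin 2 → Fml → Fml

/-- A HT-model: a HT-frame together with a hereditary meaning function on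
propositional variables. -/
structure HTModel (W : Type*) extends HTFrame W where
  m : ℕ → Set W
  her_at : ∀ p w w', R w w' → w ∈ m p → w' ∈ m p

/-- Satisfaction of a formula at a state of a HT-model. -/
def Sat {W : Type*} (M : HTModel W) : Fml → W → Prop
  | .var p => fun w => w ∈ M.m p
  | .and α β => fun w => Sat M α w ∧ Sat M β w
  | .or α β => fun w => Sat M α w ∨ Sat M β w
  | .imp α β => fun w => ∀ w', M.R w w' → Sat M α w' → Sat M β w'
  | .neg α => fun w => ∀ w', M.R w w' → ¬ Sat M α w'
  | .S i α => fun w => Sat M α (M.s i w)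

/-- A homomorphism from formulas into a HT-algebra: a map preserving
∧, ∨, ⇒, ¬, S₁, S₂. -/
def IsHom {A : Type*} [HeytingAlgebra A] (H : HTAlgebra A) (h : Fml → A) : Prop :=
  (∀ α β, h (.and α β) = h α ⊓ h β) ∧
  (∀ α β, h (.or α β) = h α ⊔ h β) ∧
  (∀ α β, h (.imp α β) = h α ⇨ h β) ∧
  (∀ α, h (.neg α) = (h α)ᶜ) ∧
  (∀ (i : Fin 2) α, h (.S i α) = H.S i (h α))

/-- α is an algebraic consequence of Γ: in every algebraic model (A, h) in
which all formulas of Γ are true (h(γ) = 1), α is true (h(α) = 1). -/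
def AlgConsequence (Γ : Set Fml) (α : Fml) : Prop :=
  ∀ (A : Type) (_ : HeytingAlgebra A) (H : HTAlgebra A) (h : Fml → A),
    IsHom H h → (∀ γ ∈ Γ, h γ = ⊤) → h α = ⊤

/-- α is a relational HT-consequence of Γ: in every HT-model in which all
formulas of Γ are true, α is true. -/
def RelConsequence (Γ : Set Fml) (α : Fml) : Prop :=
  ∀ (W : Type) (_ : Nonempty W) (M : HTModel W),
    (∀ γ ∈ Γ, ∀ w, Sat M γ w) → ∀ w, Sat M α w

namespace ThmAux

variable {A : Type*} [HeytingAlgebra A] (H : HTAlgebra A)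

lemma S_mono (i : Fin 2) {a b : A} (hab : a ≤ b) : H.S i a ≤ H.S i b := by
  have h1 : H.S i (a ⊓ b) = H.S i a ⊓ H.S i b := H.S_inf i a b
  rw [inf_eq_left.2 hab] at h1
  exact inf_eq_left.1 h1.symm

lemma S1_le (a : A) : H.S 0 a ≤ a := sup_eq_right.1 (H.S1_sup_self a)

lemma S1_top : H.S 0 (⊤ : A) = ⊤ := by
  have := H.S1_himp (⊤ : A) ⊤
  rw [himp_self, himp_self, himp_self, inf_top_eq] at this
  exact this

lemma S2_top : H.S 1 (⊤ : A) = ⊤ := by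
  have := H.S2_himp (⊤ : A) ⊤
  rw [himp_self, himp_self] at this
  exact this

lemma S_top (i : Fin 2) : H.S i (⊤ : A) = ⊤ := by
  fin_cases i
  · exact S1_top H
  · exact S2_top H

lemma S1_bot : H.S 0 (⊥ : A) = ⊥ := le_bot_iff.1 (S1_le H ⊥)

lemma S2_bot : H.S 1 (⊥ : A) = ⊥ := by
  have := H.S_S 1 0 (⊥ : A)
  rw [S1_bot H] at this
  exact this

lemma S_bot (i : Fin 2) : H.S i (⊥ : A) = ⊥ := by
  fin_cases i
  · exact S1_bot H
  · exact S2_bot H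

lemma S0_le_S1 (a : A) : H.S 0 a ≤ H.S 1 a := by
  have := S_mono H 1 (S1_le H a)
  rwa [H.S_S 1 0] at this

lemma le_S2 (a : A) : a ≤ H.S 1 a := by
  have hz : H.S 0 (a ⇨ H.S 1 a) = ⊤ := by
    rw [H.S1_himp, H.S_S 0 1, H.S_S 1 1, himp_self, inf_top_eq,
      himp_eq_top_iff.2 (S0_le_S1 H a)]
  have h2 : (a ⇨ H.S 1 a) = ⊤ := top_le_iff.1 (hz ▸ S1_le H (a ⇨ H.S 1 a))
  exact himp_eq_top_iff.1 h2

lemma key_lemma {c : A} (hc : H.S 0 c = ⊥) (a : A) : c ⊓ H.S 1 a ≤ a := by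
  have hz : H.S 0 (c ⇨ (H.S 1 a ⇨ a)) = ⊤ := by
    rw [H.S1_himp, hc, bot_himp, H.S2_himp, H.S_S 1 1, himp_self, himp_top, inf_top_eq]
  have h2 : (c ⇨ (H.S 1 a ⇨ a)) = ⊤ := top_le_iff.1 (hz ▸ S1_le H _)
  have h3 : c ≤ H.S 1 a ⇨ a := himp_eq_top_iff.1 h2
  exact le_himp_iff.1 h3

lemma S0_compl (x : A) : H.S 0 ((H.S 0 x)ᶜ) = (H.S 0 x)ᶜ := by
  rw [← himp_bot, H.S1_himp, H.S_S 0 0, H.S_S 1 0, S1_bot H, S2_bot H, inf_idem, himp_bot]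

lemma S_lem (i : Fin 2) (a : A) : H.S i a ⊔ (H.S i a)ᶜ = ⊤ := by
  fin_cases i
  · exact H.S1_lem a
  · have := H.S1_lem (H.S 1 a)
    rwa [H.S_S 0 1] at this


variable {W : Type} (M : HTModel W)

lemma fin2 (i : Fin 2) : i = 0 ∨ i = 1 := by omega

def IsUp (U : Set W) : Prop := ∀ ⦃w w'⦄, M.R w w' → w ∈ U → w' ∈ U

def Up := {U : Set W // IsUp M U}

instance : Lattice (Up M) :=
  Subtype.lattice
    (fun U V hU hV => fun w w' hR hw => by
      have hw' : w ∈ U ∪ V := hw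
      exact Or.imp (hU hR) (hV hR) hw')
    (fun U V hU hV => fun w w' hR hw => by
      have hw' : w ∈ U ∩ V := hw
      exact ⟨hU hR hw'.1, hV hR hw'.2⟩)

instance : GeneralizedHeytingAlgebra (Up M) where
  top := ⟨Set.univ, fun _ _ _ _ => trivial⟩
  le_top U := Set.subset_univ _
  himp U V := ⟨{w | ∀ w', M.R w w' → w' ∈ U.1 → w' ∈ V.1},
    fun w w' hR hw w'' hR' hU => hw w'' (M.trans _ _ _ hR hR') hU⟩
  le_himp_iff a b c := by
    constructor
    · intro h w hw
      exact h hw.1 w (M.refl w) hw.2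
    · intro h w hw w' hR hb
      exact h ⟨a.2 hR hw, hb⟩

instance : HeytingAlgebra (Up M) where
  bot := ⟨∅, fun _ _ _ h => h.elim⟩
  bot_le U := Set.empty_subset _
  compl U := ⟨{w | ∀ w', M.R w w' → w' ∉ U.1},
    fun w w' hR hw w'' hR' => hw w'' (M.trans _ _ _ hR hR')⟩
  himp_bot U := Subtype.ext (Set.ext fun w => by
    simp only [Set.mem_setOf_eq]
    exact ⟨fun h w' hR hU => h w' hR hU, fun h w' hR hU => h w' hR hU⟩)

def upHT : HTAlgebra (Up M) where
  S i U := ⟨(M.s i) ⁻¹' U.1, fun w w' hR hw => U.2 (M.K5 i _ _ hR).1 hw⟩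
  S_inf i a b := rfl
  S_sup i a b := rfl
  S2_himp U V := Subtype.ext (Set.ext fun w => by
    constructor
    · intro hw w' hR hU
      exact hw (M.s 1 w') (M.K5 1 _ _ hR).1 hU
    · intro hw v hRv hU
      obtain ⟨i, u, rfl⟩ := M.K6 v
      rcases fin2 i with rfl | rfl
      · have h1 : M.R (M.s 0 u) (M.s 0 w) := by
          have := (M.K5 0 _ _ hRv).2
          rwa [M.s_s 1 0, M.s_s 0 0] at this
        have hRw : M.R (M.s 0 u) (M.s 1 w) :=
          M.trans _ _ _ h1 (M.trans _ _ _ (M.K3 w) (M.K4 w))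
        have hUs : M.s 1 w ∈ U.1 := U.2 hRw hU
        have hVs : M.s 1 w ∈ V.1 := hw w (M.refl w) hUs
        exact V.2 hRv hVs
      · have hv : M.s 1 (M.s 1 u) = M.s 1 u := M.s_s 1 1 u
        have hRwv : M.R w (M.s 1 u) := M.trans _ _ _ (M.K4 w) hRv
        have hU' : M.s 1 (M.s 1 u) ∈ U.1 := by rw [hv]; exact hU
        have hV' : M.s 1 (M.s 1 u) ∈ V.1 := hw (M.s 1 u) hRwv hU'
        rw [hv] at hV'
        exact hV'
    )
  S1_himp U V := Subtype.ext (Set.ext fun w => by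
    constructor
    · intro hw
      constructor
      · intro w' hR hU
        exact hw (M.s 0 w') (M.K5 0 _ _ hR).1 hU
      · intro w' hR hU
        have : M.R (M.s 0 w) (M.s 1 w') :=
          M.trans _ _ _ (M.K3 w) (M.trans _ _ _ hR (M.K4 w'))
        exact hw (M.s 1 w') this hU
    · rintro ⟨h1, h2⟩ v hRv hU
      obtain ⟨i, u, rfl⟩ := M.K6 v
      rcases fin2 i with rfl | rfl
      · have ha : M.R (M.s 0 w) (M.s 0 u) := by
          have := (M.K5 0 _ _ hRv).1
          rwa [M.s_s 0 0, M.s_s 0 0] at this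
        have hb : M.R (M.s 0 u) (M.s 0 w) := by
          have := (M.K5 0 _ _ hRv).2
          rwa [M.s_s 0 0, M.s_s 0 0] at this
        have hUs : M.s 0 w ∈ U.1 := U.2 hb hU
        have hVs : M.s 0 w ∈ V.1 := h1 w (M.refl w) hUs
        exact V.2 ha hVs
      · have ha : M.R (M.s 1 w) (M.s 1 u) := by
          have := (M.K5 1 _ _ hRv).1
          rwa [M.s_s 0 1, M.s_s 1 1] at this
        have hb : M.R (M.s 1 u) (M.s 1 w) := by
          have := (M.K5 1 _ _ hRv).2
          rwa [M.s_s 0 1, M.s_s 1 1] at this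
        have hUs : M.s 1 w ∈ U.1 := U.2 hb hU
        have hVs : M.s 1 w ∈ V.1 := h2 w (M.refl w) hUs
        exact V.2 ha hVs)
  S_S i j U := Subtype.ext (Set.ext fun w => by
    simp only [Set.mem_preimage, M.s_s i j w])
  S1_sup_self U := sup_eq_right.2 (fun w hw => U.2 (M.K3 w) hw)
  S1_lem U := top_le_iff.1 (fun w _ => by
    by_cases hU : M.s 0 w ∈ U.1
    · exact Or.inl hU
    · refine Or.inr (fun w' hR hw' => hU ?_)
      exact U.2 (M.K5 0 _ _ hR).2 hw')

lemma sat_her (φ : Fml) : ∀ {w w'}, M.R w w' → Sat M φ w → Sat M φ w' := by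
  induction φ with
  | var p => exact fun hR hw => M.her_at _ _ _ hR hw
  | and α β ihα ihβ => exact fun hR hw => ⟨ihα hR hw.1, ihβ hR hw.2⟩
  | or α β ihα ihβ => exact fun hR hw => hw.imp (ihα hR) (ihβ hR)
  | imp α β ihα ihβ =>
    exact fun hR hw w'' hR' hα => hw w'' (M.trans _ _ _ hR hR') hα
  | neg α ihα => exact fun hR hw w'' hR' => hw w'' (M.trans _ _ _ hR hR')
  | S i α ihα => exact fun hR hw => ihα (M.K5 i _ _ hR).1 hw

def hM : Fml → Up M := fun φ => ⟨{w | Sat M φ w}, fun _ _ hR hw => sat_her M φ hR hw⟩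

lemma hM_isHom : IsHom (upHT M) (hM M) :=
  ⟨fun α β => rfl, fun α β => rfl, fun α β => rfl, fun α => rfl, fun i α => rfl⟩

lemma up_top_coe : (⊤ : Up M).1 = Set.univ := rfl

lemma hM_top_iff (φ : Fml) : hM M φ = ⊤ ↔ ∀ w, Sat M φ w := by
  rw [show hM M φ = ⊤ ↔ (hM M φ).1 = (⊤ : Up M).1 from Subtype.ext_iff, up_top_coe M]
  constructor
  · intro h w
    have : w ∈ (hM M φ).1 := by rw [h]; trivial
    exact this
  · intro h
    exact Set.eq_univ_of_forall h


section PF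
variable {A : Type} [HeytingAlgebra A]

structure IsFil (F : Set A) : Prop where
  top : ⊤ ∈ F
  up : ∀ {a b : A}, a ∈ F → a ≤ b → b ∈ F
  inf : ∀ {a b : A}, a ∈ F → b ∈ F → a ⊓ b ∈ F

structure IsPF (F : Set A) : Prop where
  top : ⊤ ∈ F
  up : ∀ {a b : A}, a ∈ F → a ≤ b → b ∈ F
  inf : ∀ {a b : A}, a ∈ F → b ∈ F → a ⊓ b ∈ F
  nbot : (⊥ : A) ∉ F
  prime : ∀ {a b : A}, a ⊔ b ∈ F → a ∈ F ∨ b ∈ F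

lemma IsPF.fil {F : Set A} (h : IsPF F) : IsFil F := ⟨h.top, h.up, h.inf⟩

lemma fil_cone {F : Set A} (hF : IsFil F) (z : A) :
    IsFil {t | ∃ g ∈ F, g ⊓ z ≤ t} := by
  constructor
  · exact ⟨⊤, hF.top, le_top⟩
  · rintro a c ⟨g, hg, hle⟩ hac
    exact ⟨g, hg, hle.trans hac⟩
  · rintro a c ⟨g1, hg1, h1⟩ ⟨g2, hg2, h2⟩
    exact ⟨g1 ⊓ g2, hF.inf hg1 hg2,
      le_inf ((inf_le_inf_right z inf_le_left).trans h1)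
        ((inf_le_inf_right z inf_le_right).trans h2)⟩

lemma mem_cone_self {F : Set A} (hF : IsFil F) (z : A) :
    z ∈ {t | ∃ g ∈ F, g ⊓ z ≤ t} := ⟨⊤, hF.top, inf_le_right⟩

lemma cone_superset {F : Set A} (z : A) : F ⊆ {t | ∃ g ∈ F, g ⊓ z ≤ t} :=
  fun g hg => ⟨g, hg, inf_le_left⟩

lemma prime_ext {F : Set A} (hF : IsFil F) {b : A} (hb : b ∉ F) :
    ∃ G, IsPF G ∧ F ⊆ G ∧ b ∉ G := by
  classical
  obtain ⟨m, hFm, hmax⟩ :=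
    zorn_subset_nonempty {G : Set A | IsFil G ∧ F ⊆ G ∧ b ∉ G}
      (fun c hcS hchain hcne => by
        refine ⟨⋃₀ c, ⟨⟨?_, ?_, ?_⟩, ?_, ?_⟩, fun s hs => Set.subset_sUnion_of_mem hs⟩
        · obtain ⟨G, hG⟩ := hcne
          exact Set.mem_sUnion.2 ⟨G, hG, (hcS hG).1.top⟩
        · intro a x ha hax
          obtain ⟨G, hG, haG⟩ := Set.mem_sUnion.1 ha
          exact Set.mem_sUnion.2 ⟨G, hG, (hcS hG).1.up haG hax⟩
        · intro a x ha hx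
          obtain ⟨G1, hG1, haG⟩ := Set.mem_sUnion.1 ha
          obtain ⟨G2, hG2, hxG⟩ := Set.mem_sUnion.1 hx
          rcases hchain.total hG1 hG2 with h | h
          · exact Set.mem_sUnion.2 ⟨G2, hG2, (hcS hG2).1.inf (h haG) hxG⟩
          · exact Set.mem_sUnion.2 ⟨G1, hG1, (hcS hG1).1.inf haG (h hxG)⟩
        · obtain ⟨G, hG⟩ := hcne
          exact (hcS hG).2.1.trans (Set.subset_sUnion_of_mem hG)
        · intro hbU
          obtain ⟨G, hG, hbG⟩ := Set.mem_sUnion.1 hbU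
          exact (hcS hG).2.2 hbG)
      F ⟨hF, Set.Subset.rfl, hb⟩
  have hm : IsFil m := hmax.1.1
  have hbm : b ∉ m := hmax.1.2.2
  refine ⟨m, ⟨hm.top, hm.up, hm.inf, fun hbot => hbm (hm.up hbot bot_le), ?_⟩, hFm, hbm⟩
  intro x y hxy
  by_contra hcon
  push_neg at hcon
  obtain ⟨hx, hy⟩ := hcon
  have hext : ∀ z : A, z ∉ m → b ∈ {t | ∃ g ∈ m, g ⊓ z ≤ t} := by
    intro z hz
    by_contra hbz
    have hS' : IsFil {t | ∃ g ∈ m, g ⊓ z ≤ t} ∧ F ⊆ {t | ∃ g ∈ m, g ⊓ z ≤ t} ∧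
        b ∉ {t | ∃ g ∈ m, g ⊓ z ≤ t} :=
      ⟨fil_cone hm z, hFm.trans (cone_superset z), hbz⟩
    have hsub := hmax.2 hS' (cone_superset z)
    exact hz (hsub (mem_cone_self hm z))
  obtain ⟨g1, hg1, h1⟩ := hext x hx
  obtain ⟨g2, hg2, h2⟩ := hext y hy
  have hgm : g1 ⊓ g2 ⊓ (x ⊔ y) ∈ m := hm.inf (hm.inf hg1 hg2) hxy
  have hle : g1 ⊓ g2 ⊓ (x ⊔ y) ≤ b := by
    rw [inf_sup_left]
    refine sup_le (le_trans ?_ h1) (le_trans ?_ h2)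
    · exact inf_le_inf_right x inf_le_left
    · exact inf_le_inf_right y inf_le_right
  exact hbm (hm.up hgm hle)

lemma himp_ext {F : Set A} (hF : IsPF F) {a b : A} (h : a ⇨ b ∉ F) :
    ∃ G, IsPF G ∧ F ⊆ G ∧ a ∈ G ∧ b ∉ G := by
  have hbF : b ∉ {t | ∃ g ∈ F, g ⊓ a ≤ t} := by
    rintro ⟨g, hg, hle⟩
    exact h (hF.up hg (le_himp_iff.2 hle))
  obtain ⟨G, hG, hsub, hbG⟩ := prime_ext (fil_cone hF.fil a) hbF
  exact ⟨G, hG, (cone_superset a).trans hsub, hsub (mem_cone_self hF.fil a), hbG⟩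

end PF

section Canonical
variable {A : Type} [HeytingAlgebra A]

def CW (A : Type) [HeytingAlgebra A] : Type := {F : Set A // IsPF F}

def sPF (H : HTAlgebra A) (i : Fin 2) (F : CW A) : CW A :=
  ⟨{a | H.S i a ∈ F.1}, by
    constructor
    · show H.S i ⊤ ∈ F.1
      rw [S_top H i]; exact F.2.top
    · intro a b ha hab
      exact F.2.up ha (S_mono H i hab)
    · intro a b ha hb
      show H.S i (a ⊓ b) ∈ F.1
      rw [H.S_inf]; exact F.2.inf ha hb
    · show H.S i ⊥ ∉ F.1
      rw [S_bot H i]; exact F.2.nbot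
    · intro a b hab
      have h1 : H.S i a ⊔ H.S i b ∈ F.1 := by
        rw [← H.S_sup]; exact hab
      exact F.2.prime h1⟩

lemma S_mem_of_subset (H : HTAlgebra A) {F G : CW A} (hFG : F.1 ⊆ G.1) {i : Fin 2}
    {a : A} (ha : H.S i a ∈ G.1) : H.S i a ∈ F.1 := by
  have htop : H.S i a ⊔ (H.S i a)ᶜ ∈ F.1 := by rw [S_lem H i a]; exact F.2.top
  rcases F.2.prime htop with h | h
  · exact h
  · exfalso
    have h2 : H.S i a ⊓ (H.S i a)ᶜ ∈ G.1 := G.2.inf ha (hFG h)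
    rw [inf_compl_eq_bot] at h2
    exact G.2.nbot h2

def canonM (H : HTAlgebra A) (h : Fml → A) : HTModel (CW A) where
  R F G := F.1 ⊆ G.1
  s := sPF H
  refl F := subset_rfl
  trans F G K h1 h2 := h1.trans h2
  s_s i j F := Subtype.ext (Set.ext fun a => by
    show H.S i (H.S j a) ∈ F.1 ↔ H.S j a ∈ F.1
    rw [H.S_S i j a])
  K3 F := fun a ha => F.2.up ha (S1_le H a)
  K4 F := fun a ha => F.2.up ha (le_S2 H a)
  K5 i F G hFG := by
    have heq : (sPF H i F).1 = (sPF H i G).1 := by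
      ext a
      exact ⟨fun ha => hFG ha, fun ha => S_mem_of_subset H hFG ha⟩
    exact ⟨fun a ha => heq ▸ ha, fun a ha => heq.symm ▸ ha⟩
  K6 F := by
    by_cases hc : ∀ x ∈ F.1, H.S 0 x ∈ F.1
    · refine ⟨0, F, Subtype.ext (Set.ext fun x => ?_)⟩
      exact ⟨fun hx => hc x hx, fun hx => F.2.up hx (S1_le H x)⟩
    · push_neg at hc
      obtain ⟨x, hx, hnx⟩ := hc
      refine ⟨1, F, Subtype.ext (Set.ext fun a => ?_)⟩
      constructor
      · intro ha
        exact F.2.up ha (le_S2 H a)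
      · intro ha
        show a ∈ F.1
        have hlem : H.S 0 x ⊔ (H.S 0 x)ᶜ ∈ F.1 := by rw [H.S1_lem x]; exact F.2.top
        rcases F.2.prime hlem with h1 | h1
        · exact absurd h1 hnx
        · have hcF : (H.S 0 x)ᶜ ⊓ x ∈ F.1 := F.2.inf h1 hx
          have hS0 : H.S 0 ((H.S 0 x)ᶜ ⊓ x) = ⊥ := by
            rw [H.S_inf, S0_compl H x, inf_comm, inf_compl_eq_bot]
          exact F.2.up (F.2.inf hcF ha) (key_lemma H hS0 a)
  m p := {F | h (.var p) ∈ F.1}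
  her_at p F G hFG hF := hFG hF

lemma truth (H : HTAlgebra A) (h : Fml → A) (hh : IsHom H h) :
    ∀ (φ : Fml) (F : CW A), Sat (canonM H h) φ F ↔ h φ ∈ F.1 := by
  obtain ⟨handE, horE, himpE, hnegE, hSE⟩ := hh
  intro φ
  induction φ with
  | var p => exact fun F => Iff.rfl
  | and α β ihα ihβ =>
    intro F
    rw [handE]
    constructor
    · rintro ⟨h1, h2⟩
      exact F.2.inf ((ihα F).1 h1) ((ihβ F).1 h2)
    · intro hin
      exact ⟨(ihα F).2 (F.2.up hin inf_le_left), (ihβ F).2 (F.2.up hin inf_le_right)⟩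
  | or α β ihα ihβ =>
    intro F
    rw [horE]
    constructor
    · rintro (h1 | h1)
      · exact F.2.up ((ihα F).1 h1) le_sup_left
      · exact F.2.up ((ihβ F).1 h1) le_sup_right
    · intro hin
      rcases F.2.prime hin with h1 | h1
      · exact Or.inl ((ihα F).2 h1)
      · exact Or.inr ((ihβ F).2 h1)
  | imp α β ihα ihβ =>
    intro F
    rw [himpE]
    constructor
    · intro hsat
      by_contra hnin
      obtain ⟨G, hG, hFG, haG, hbG⟩ := himp_ext F.2 hnin
      have h1 := hsat ⟨G, hG⟩ hFG ((ihα ⟨G, hG⟩).2 haG)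
      exact hbG ((ihβ ⟨G, hG⟩).1 h1)
    · intro hin G hFG hα
      have h1 : h α ∈ G.1 := (ihα G).1 hα
      have h2 : (h α ⇨ h β) ⊓ h α ∈ G.1 := G.2.inf (hFG hin) h1
      exact (ihβ G).2 (G.2.up h2 himp_inf_le)
  | neg α ihα =>
    intro F
    rw [hnegE]
    constructor
    · intro hsat
      by_contra hnin
      rw [← himp_bot] at hnin
      obtain ⟨G, hG, hFG, haG, _⟩ := himp_ext F.2 hnin
      exact hsat ⟨G, hG⟩ hFG ((ihα ⟨G, hG⟩).2 haG)
    · intro hin G hFG hα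
      have h1 : h α ⊓ (h α)ᶜ ∈ G.1 := G.2.inf ((ihα G).1 hα) (hFG hin)
      rw [inf_compl_eq_bot] at h1
      exact G.2.nbot h1
  | S i α ihα =>
    intro F
    rw [hSE]
    exact ihα ((canonM H h).s i F)

end Canonical

end ThmAux

/-- Theorem 5.5: α is a relational HT-consequence of Γ iff α is an algebraic
consequence of Γ. -/
theorem stmt_16 (Γ : Set Fml) (α : Fml) :
    RelConsequence Γ α ↔ AlgConsequence Γ α := by
  constructor
  · -- relational consequence implies algebraic consequence
    intro hrel A hA H h hh hΓ
    by_contra hne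
    have hb : h α ∉ {x : A | x = ⊤} := hne
    have hfil : ThmAux.IsFil {x : A | x = ⊤} := by
      constructor
      · rfl
      · intro a b ha hab
        show b = ⊤
        rw [Set.mem_setOf_eq] at ha
        exact le_antisymm le_top (ha ▸ hab)
      · intro a b ha hb'
        show a ⊓ b = ⊤
        rw [Set.mem_setOf_eq] at ha hb'
        rw [ha, hb', inf_top_eq]
    obtain ⟨G, hG, _, hbG⟩ := ThmAux.prime_ext hfil hb
    have hsat := hrel (ThmAux.CW A) ⟨⟨G, hG⟩⟩ (ThmAux.canonM H h)
      (fun γ hγ F => (ThmAux.truth H h hh γ F).2 (by rw [hΓ γ hγ]; exact F.2.top))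
      ⟨G, hG⟩
    exact hbG ((ThmAux.truth H h hh α ⟨G, hG⟩).1 hsat)
  · -- algebraic consequence implies relational consequence
    intro halg W _ M hΓ w
    have h1 := halg (ThmAux.Up M) inferInstance (ThmAux.upHT M) (ThmAux.hM M)
      (ThmAux.hM_isHom M) (fun γ hγ => (ThmAux.hM_top_iff M γ).2 (hΓ γ hγ))
    exact (ThmAux.hM_top_iff M α).1 h1 w
end

section
/- A formula α is HT-valid (true in every HT-model) if and only if α is algebraically valid (h(α)=1 for every algebraic model (A,h)). -/
section AlgLemmas
variable {A : Type*} [HeytingAlgebra A] (H : HTAlgebra A)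

namespace HTAlgebra

theorem S_mono_s17 {a b : A} (i : Fin 2) (hab : a ≤ b) : H.S i a ≤ H.S i b := by
  have h : a ⊓ b = a := inf_eq_left.2 hab
  calc H.S i a = H.S i (a ⊓ b) := by rw [h]
    _ = H.S i a ⊓ H.S i b := H.S_inf i a b
    _ ≤ H.S i b := inf_le_right

theorem S_top (i : Fin 2) : H.S i (⊤ : A) = ⊤ := by
  fin_cases i
  · simpa using H.S1_himp (⊤ : A) ⊤
  · simpa using H.S2_himp (⊤ : A) ⊤

theorem S1_le_s17 (a : A) : H.S 0 a ≤ a := sup_eq_right.1 (H.S1_sup_self a)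

theorem S1_bot : H.S 0 (⊥ : A) = ⊥ := le_bot_iff.1 (H.S1_le_s17 ⊥)

theorem S2_bot : H.S 1 (⊥ : A) = ⊥ := by
  set c := H.S 1 (⊥ : A) with hc
  have h1 : H.S 0 (c ⇨ ⊥) = cᶜ := by
    rw [H.S1_himp, H.S_S 0 1, H.S_S 1 1, H.S1_bot, ← hc, himp_self, inf_top_eq, himp_bot]
  have h2 : H.S 1 (c ⇨ ⊥) = ⊤ := by
    rw [H.S2_himp, H.S_S 1 1, ← hc, himp_self]
  have h3 : (cᶜ : A) = ⊤ := by
    have h4 : H.S 1 (cᶜ) = cᶜ := by rw [← h1, H.S_S 1 0]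
    rw [← h4, ← himp_bot, h2]
  have h5 : c ⇨ ⊥ = ⊤ := by rw [himp_bot, h3]
  exact le_bot_iff.1 (himp_eq_top_iff.1 h5)

theorem S_bot (i : Fin 2) : H.S i (⊥ : A) = ⊥ := by
  fin_cases i
  · exact H.S1_bot
  · exact H.S2_bot

theorem le_S2 (a : A) : a ≤ H.S 1 a := by
  set t := a ⇨ H.S 1 a with ht
  have h2 : H.S 1 t = ⊤ := by rw [ht, H.S2_himp, H.S_S 1 1, himp_self]
  have h1 : H.S 0 t = t := by
    apply le_antisymm (H.S1_le_s17 t)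
    have h : H.S 0 t = H.S 0 a ⇨ H.S 1 a := by
      rw [ht, H.S1_himp, H.S_S 0 1, H.S_S 1 1, himp_self, inf_top_eq]
    rw [h, ht]
    exact himp_le_himp_right (H.S1_le_s17 a)
  have h3 : t = ⊤ := by
    have h4 := H.S_S 1 0 t
    rw [h1] at h4
    rw [← h4, h2]
  rw [ht] at h3
  exact himp_eq_top_iff.1 h3

theorem S_lem (i : Fin 2) (a : A) : H.S i a ⊔ (H.S i a)ᶜ = ⊤ := by
  have h : H.S i a = H.S 0 (H.S i a) := (H.S_S 0 i a).symm
  rw [h]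
  exact H.S1_lem _

/-- key identity for K6 of the canonical frame -/
theorem key (a b : A) : a ⊓ (H.S 0 a)ᶜ ⊓ H.S 1 b ≤ b := by
  set u := a ⊓ (H.S 0 a)ᶜ ⊓ H.S 1 b with hu
  have hu1 : H.S 0 u = ⊥ := by
    have hc : H.S 0 ((H.S 0 a)ᶜ) = (H.S 0 a)ᶜ := by
      rw [← himp_bot, H.S1_himp, H.S_S 0 0, H.S_S 1 0, H.S1_bot, H.S2_bot, himp_bot,
        inf_idem]
    rw [hu, H.S_inf, H.S_inf, hc, H.S_S 0 1, inf_compl_self, bot_inf_eq]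
  have hu2 : H.S 1 u ≤ H.S 1 b := by
    have h := H.S_mono_s17 1 (inf_le_right : u ≤ H.S 1 b)
    rwa [H.S_S 1 1] at h
  have hv : H.S 0 (u ⇨ b) = ⊤ := by
    rw [H.S1_himp, hu1, himp_eq_top_iff.2 hu2]
    simp
  have : (u ⇨ b) = ⊤ := top_le_iff.1 (hv ▸ H.S1_le_s17 (u ⇨ b))
  exact himp_eq_top_iff.1 this

end HTAlgebra
end AlgLemmas

section PrimeFilters
variable {A : Type*} [HeytingAlgebra A]

/-- prime filters -/
def IsPF (F : Set A) : Prop :=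
  ⊥ ∉ F ∧ ⊤ ∈ F ∧ (∀ ⦃a b⦄, a ∈ F → b ∈ F → a ⊓ b ∈ F) ∧
  (∀ ⦃a b⦄, a ≤ b → a ∈ F → b ∈ F) ∧ (∀ ⦃a b⦄, a ⊔ b ∈ F → a ∈ F ∨ b ∈ F)

theorem exists_pf (F0 : Set A) (htop : ⊤ ∈ F0)
    (hinf : ∀ ⦃a b⦄, a ∈ F0 → b ∈ F0 → a ⊓ b ∈ F0)
    (hup : ∀ ⦃a b⦄, a ≤ b → a ∈ F0 → b ∈ F0)
    (b : A) (hb : b ∉ F0) :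
    ∃ G : Set A, IsPF G ∧ F0 ⊆ G ∧ b ∉ G := by
  set S : Set (Set A) := {G | F0 ⊆ G ∧ ⊤ ∈ G ∧ (∀ ⦃x y⦄, x ∈ G → y ∈ G → x ⊓ y ∈ G) ∧
    (∀ ⦃x y⦄, x ≤ y → x ∈ G → y ∈ G) ∧ b ∉ G} with hS
  have hchain : ∀ c ⊆ S, IsChain (· ⊆ ·) c → c.Nonempty → ∃ ub ∈ S, ∀ s ∈ c, s ⊆ ub := by
    intro c hcS hchain ⟨G0, hG0⟩
    refine ⟨⋃₀ c, ⟨?_, ?_, ?_, ?_, ?_⟩, fun s hs => Set.subset_sUnion_of_mem hs⟩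
    · exact (hcS hG0).1.trans (Set.subset_sUnion_of_mem hG0)
    · exact ⟨G0, hG0, (hcS hG0).2.1⟩
    · rintro x y ⟨G1, hG1, hx⟩ ⟨G2, hG2, hy⟩
      rcases hchain.total hG1 hG2 with h | h
      · exact ⟨G2, hG2, (hcS hG2).2.2.1 (h hx) hy⟩
      · exact ⟨G1, hG1, (hcS hG1).2.2.1 hx (h hy)⟩
    · rintro x y hxy ⟨G1, hG1, hx⟩
      exact ⟨G1, hG1, (hcS hG1).2.2.2.1 hxy hx⟩
    · rintro ⟨G1, hG1, hbG1⟩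
      exact (hcS hG1).2.2.2.2 hbG1
  obtain ⟨M, hF0M, hmax⟩ := zorn_subset_nonempty S hchain F0 ⟨subset_rfl, htop, hinf, hup, hb⟩
  obtain ⟨hF0M', htopM, hinfM, hupM, hbM⟩ := hmax.prop
  have hprime : ∀ ⦃x y⦄, x ⊔ y ∈ M → x ∈ M ∨ y ∈ M := by
    intro x y hxy
    by_contra hcon
    push_neg at hcon
    obtain ⟨hx, hy⟩ := hcon
    -- for z ∉ M, the filter generated by M ∪ {z} must contain b
    have aux : ∀ z, z ∉ M → ∃ c ∈ M, c ⊓ z ≤ b := by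
      intro z hz
      by_contra hcon2
      push_neg at hcon2
      set G : Set A := {w | ∃ c ∈ M, c ⊓ z ≤ w} with hG
      have hMG : M ⊆ G := fun w hw => ⟨w, hw, inf_le_left⟩
      have hGS : G ∈ S := by
        refine ⟨hF0M'.trans hMG, hMG htopM, ?_, ?_, ?_⟩
        · rintro u v ⟨c1, hc1, h1⟩ ⟨c2, hc2, h2⟩
          refine ⟨c1 ⊓ c2, hinfM hc1 hc2, ?_⟩
          calc c1 ⊓ c2 ⊓ z ≤ (c1 ⊓ z) ⊓ (c2 ⊓ z) := by
                refine le_inf (inf_le_inf_right z inf_le_left) (inf_le_inf_right z inf_le_right)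
            _ ≤ u ⊓ v := inf_le_inf h1 h2
        · rintro u v huv ⟨c1, hc1, h1⟩
          exact ⟨c1, hc1, h1.trans huv⟩
        · rintro ⟨c1, hc1, h1⟩
          exact hcon2 c1 hc1 h1
      have : M = G := hmax.eq_of_le hGS hMG
      exact hz (this ▸ ⟨⊤, htopM, by simpa using inf_le_right⟩)
    obtain ⟨c1, hc1, h1⟩ := aux x hx
    obtain ⟨c2, hc2, h2⟩ := aux y hy
    have hcM : c1 ⊓ c2 ⊓ (x ⊔ y) ∈ M := hinfM (hinfM hc1 hc2) hxy
    have hle : c1 ⊓ c2 ⊓ (x ⊔ y) ≤ b := by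
      rw [inf_sup_left]
      refine sup_le ?_ ?_
      · exact le_trans (inf_le_inf_right x (inf_le_left)) h1
      · exact le_trans (inf_le_inf_right y (inf_le_right)) h2
    exact hbM (hupM hle hcM)
  have hbot : ⊥ ∉ M := fun h => hbM (hupM bot_le h)
  exact ⟨M, ⟨hbot, htopM, hinfM, hupM, hprime⟩, hF0M, hbM⟩

end PrimeFilters

section Canonical
variable {A : Type*} [HeytingAlgebra A]

/-- the canonical `s i` on prime filters -/
def canS (H : HTAlgebra A) (i : Fin 2) (F : {F : Set A // IsPF F}) : {F : Set A // IsPF F} :=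
  ⟨{a | H.S i a ∈ F.1}, by
    obtain ⟨hbot, htop, hinf, hup, hprime⟩ := F.2
    refine ⟨?_, ?_, ?_, ?_, ?_⟩
    · show H.S i ⊥ ∈ F.1 → False
      rw [H.S_bot i]; exact hbot
    · show H.S i ⊤ ∈ F.1
      rw [H.S_top i]; exact htop
    · intro a b ha hb
      show H.S i (a ⊓ b) ∈ F.1
      rw [H.S_inf]; exact hinf ha hb
    · intro a b hab ha
      exact hup (H.S_mono_s17 i hab) ha
    · intro a b hab
      have : H.S i a ⊔ H.S i b ∈ F.1 := by rw [← H.S_sup]; exact hab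
      exact hprime this⟩

theorem mem_of_compl_not_mem {F : Set A} (hF : IsPF F) {H : HTAlgebra A} {i : Fin 2} {a : A}
    (h : H.S i a ∈ F → False) : (H.S i a)ᶜ ∈ F := by
  have htop : H.S i a ⊔ (H.S i a)ᶜ ∈ F := by
    rw [H.S_lem i a]; exact hF.2.1
  rcases hF.2.2.2.2 htop with h' | h'
  · exact absurd h' h
  · exact h'

/-- the canonical model over the prime filters of a HT-algebra -/
def canModel (H : HTAlgebra A) (h : Fml → A) : HTModel {F : Set A // IsPF F} where
  R F G := F.1 ⊆ G.1
  s := canS H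
  refl _ := subset_rfl
  trans _ _ _ h1 h2 := h1.trans h2
  s_s i j F := by
    apply Subtype.ext
    show {a | H.S j a ∈ (canS H i F).1} = {a | H.S j a ∈ F.1}
    ext a
    show H.S i (H.S j a) ∈ F.1 ↔ H.S j a ∈ F.1
    rw [H.S_S i j]
  K3 F := by
    intro a ha
    exact F.2.2.2.2.1 (H.S1_le_s17 a) ha
  K4 F := by
    intro a ha
    exact F.2.2.2.2.1 (H.le_S2 a) ha
  K5 i F G hFG := by
    constructor
    · intro a ha
      exact hFG ha
    · intro a ha
      by_contra hcon
      have hcompl : (H.S i a)ᶜ ∈ F.1 := mem_of_compl_not_mem F.2 hcon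
      have : (⊥ : A) ∈ G.1 := by
        rw [← inf_compl_self (H.S i a)]
        exact G.2.2.2.1 ha (hFG hcompl)
      exact G.2.1 this
  K6 F := by
    by_cases hcase : ∀ a ∈ F.1, H.S 0 a ∈ F.1
    · refine ⟨0, F, ?_⟩
      apply Subtype.ext
      ext a
      constructor
      · intro ha; exact hcase a ha
      · intro ha; exact F.2.2.2.2.1 (H.S1_le_s17 a) ha
    · push_neg at hcase
      obtain ⟨a, haF, haS⟩ := hcase
      have hcompl : (H.S 0 a)ᶜ ∈ F.1 := mem_of_compl_not_mem F.2 (fun hc => haS hc)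
      refine ⟨1, F, ?_⟩
      apply Subtype.ext
      ext b
      constructor
      · intro hb; exact F.2.2.2.2.1 (H.le_S2 b) hb
      · intro hb
        have hu : a ⊓ (H.S 0 a)ᶜ ⊓ H.S 1 b ∈ F.1 :=
          F.2.2.2.1 (F.2.2.2.1 haF hcompl) hb
        exact F.2.2.2.2.1 (H.key a b) hu
  m p := {F | h (.var p) ∈ F.1}
  her_at p F G hFG hF := hFG hF

theorem can_truth (H : HTAlgebra A) (h : Fml → A) (hh : IsHom H h) :
    ∀ (β : Fml) (F : {F : Set A // IsPF F}), Sat (canModel H h) β F ↔ h β ∈ F.1 := by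
  obtain ⟨hand, hor, himp, hneg, hSi⟩ := hh
  intro β
  induction β with
  | var p => intro F; exact Iff.rfl
  | and β γ ihβ ihγ =>
    intro F
    show (Sat _ β F ∧ Sat _ γ F) ↔ _
    rw [hand, ihβ, ihγ]
    constructor
    · rintro ⟨h1, h2⟩; exact F.2.2.2.1 h1 h2
    · intro h1
      exact ⟨F.2.2.2.2.1 inf_le_left h1, F.2.2.2.2.1 inf_le_right h1⟩
  | or β γ ihβ ihγ =>
    intro F
    show (Sat _ β F ∨ Sat _ γ F) ↔ _
    rw [hor, ihβ, ihγ]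
    constructor
    · rintro (h1 | h1)
      · exact F.2.2.2.2.1 le_sup_left h1
      · exact F.2.2.2.2.1 le_sup_right h1
    · exact fun h1 => F.2.2.2.2.2 h1
  | imp β γ ihβ ihγ =>
    intro F
    show (∀ G : {F : Set A // IsPF F}, F.1 ⊆ G.1 → Sat (canModel H h) β G → Sat (canModel H h) γ G) ↔ h (Fml.imp β γ) ∈ F.1
    rw [himp]
    constructor
    · intro hsat
      by_contra hcon
      set F0 : Set A := {x | ∃ c ∈ F.1, c ⊓ h β ≤ x} with hF0
      have htop0 : ⊤ ∈ F0 := ⟨⊤, F.2.2.1, le_top⟩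
      have hinf0 : ∀ ⦃x y⦄, x ∈ F0 → y ∈ F0 → x ⊓ y ∈ F0 := by
        rintro x y ⟨c1, hc1, h1⟩ ⟨c2, hc2, h2⟩
        refine ⟨c1 ⊓ c2, F.2.2.2.1 hc1 hc2, ?_⟩
        calc c1 ⊓ c2 ⊓ h β ≤ (c1 ⊓ h β) ⊓ (c2 ⊓ h β) :=
              le_inf (inf_le_inf_right _ inf_le_left) (inf_le_inf_right _ inf_le_right)
          _ ≤ x ⊓ y := inf_le_inf h1 h2
      have hup0 : ∀ ⦃x y⦄, x ≤ y → x ∈ F0 → y ∈ F0 := by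
        rintro x y hxy ⟨c1, hc1, h1⟩
        exact ⟨c1, hc1, h1.trans hxy⟩
      have hγ0 : h γ ∉ F0 := by
        rintro ⟨c, hc, hle⟩
        exact hcon (F.2.2.2.2.1 (le_himp_iff.2 hle) hc)
      obtain ⟨G, hG, hF0G, hγG⟩ := exists_pf F0 htop0 hinf0 hup0 (h γ) hγ0
      have hFG : F.1 ⊆ G := fun c hc => hF0G ⟨c, hc, inf_le_left⟩
      have hβG : h β ∈ G := hF0G ⟨⊤, F.2.2.1, by simpa using inf_le_right⟩
      exact hγG ((ihγ ⟨G, hG⟩).1 (hsat ⟨G, hG⟩ hFG ((ihβ ⟨G, hG⟩).2 hβG)))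
    · intro hmem G hFG hβ
      rw [ihβ] at hβ
      rw [ihγ]
      have : h β ⊓ (h β ⇨ h γ) ∈ G.1 := G.2.2.2.1 hβ (hFG hmem)
      exact G.2.2.2.2.1 (inf_himp_le : h β ⊓ (h β ⇨ h γ) ≤ h γ) this
  | neg β ihβ =>
    intro F
    show (∀ G : {F : Set A // IsPF F}, F.1 ⊆ G.1 → ¬ Sat (canModel H h) β G) ↔ h (Fml.neg β) ∈ F.1
    rw [hneg]
    constructor
    · intro hsat
      by_contra hcon
      rw [← himp_bot] at hcon
      set F0 : Set A := {x | ∃ c ∈ F.1, c ⊓ h β ≤ x} with hF0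
      have htop0 : ⊤ ∈ F0 := ⟨⊤, F.2.2.1, le_top⟩
      have hinf0 : ∀ ⦃x y⦄, x ∈ F0 → y ∈ F0 → x ⊓ y ∈ F0 := by
        rintro x y ⟨c1, hc1, h1⟩ ⟨c2, hc2, h2⟩
        refine ⟨c1 ⊓ c2, F.2.2.2.1 hc1 hc2, ?_⟩
        calc c1 ⊓ c2 ⊓ h β ≤ (c1 ⊓ h β) ⊓ (c2 ⊓ h β) :=
              le_inf (inf_le_inf_right _ inf_le_left) (inf_le_inf_right _ inf_le_right)
          _ ≤ x ⊓ y := inf_le_inf h1 h2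
      have hup0 : ∀ ⦃x y⦄, x ≤ y → x ∈ F0 → y ∈ F0 := by
        rintro x y hxy ⟨c1, hc1, h1⟩
        exact ⟨c1, hc1, h1.trans hxy⟩
      have hb0 : (⊥ : A) ∉ F0 := by
        rintro ⟨c, hc, hle⟩
        exact hcon (F.2.2.2.2.1 (le_himp_iff.2 hle) hc)
      obtain ⟨G, hG, hF0G, hbG⟩ := exists_pf F0 htop0 hinf0 hup0 ⊥ hb0
      have hFG : F.1 ⊆ G := fun c hc => hF0G ⟨c, hc, inf_le_left⟩
      have hβG : h β ∈ G := hF0G ⟨⊤, F.2.2.1, by simpa using inf_le_right⟩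
      exact hsat ⟨G, hG⟩ hFG ((ihβ ⟨G, hG⟩).2 hβG)
    · intro hmem G hFG hβ
      rw [ihβ] at hβ
      have : h β ⊓ (h β)ᶜ ∈ G.1 := G.2.2.2.1 hβ (hFG hmem)
      rw [inf_compl_self] at this
      exact G.2.1 this
  | S i β ihβ =>
    intro F
    show Sat _ β (canS H i F) ↔ _
    rw [hSi, ihβ]
    exact Iff.rfl

end Canonical

section UpSets
variable {W : Type*} (M : HTModel W)

/-- hereditary (upward-closed) sets of an HT-model -/
def Up := {X : Set W // ∀ ⦃w w'⦄, M.R w w' → w ∈ X → w' ∈ X}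

instance : Lattice (Up M) :=
  Subtype.lattice
    (fun X Y hX hY => fun w w' hww' hw => by
      simp only [Set.sup_eq_union, Set.mem_union] at hw ⊢
      exact hw.imp (hX hww') (hY hww'))
    (fun X Y hX hY => fun w w' hww' hw => by
      simp only [Set.inf_eq_inter, Set.mem_inter_iff] at hw ⊢
      exact ⟨hX hww' hw.1, hY hww' hw.2⟩)

/-- Heyting implication on hereditary sets -/
def himpUp (X Y : Up M) : Up M :=
  ⟨{w | ∀ ⦃w'⦄, M.R w w' → w' ∈ X.1 → w' ∈ Y.1},
    fun w w' hww' hw u hu hX => hw (M.trans _ _ _ hww' hu) hX⟩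

def botUp : Up M := ⟨∅, fun _ _ _ h => h.elim⟩

instance upHeyting : HeytingAlgebra (Up M) where
  top := ⟨Set.univ, fun _ _ _ _ => trivial⟩
  le_top X := Set.subset_univ X.1
  bot := botUp M
  bot_le X := Set.empty_subset X.1
  himp := himpUp M
  compl X := himpUp M X (botUp M)
  himp_bot _ := rfl
  le_himp_iff X Y Z := by
    constructor
    · intro hle w hw
      exact hle hw.1 (M.refl w) hw.2
    · intro hle w hw w' hww' hw'
      exact hle ⟨X.2 hww' hw, hw'⟩

theorem up_le_def (X Y : Up M) : X ≤ Y ↔ X.1 ⊆ Y.1 := Iff.rfl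
theorem mem_inf_up (X Y : Up M) (w : W) : w ∈ (X ⊓ Y).1 ↔ w ∈ X.1 ∧ w ∈ Y.1 := Iff.rfl
theorem mem_sup_up (X Y : Up M) (w : W) : w ∈ (X ⊔ Y).1 ↔ w ∈ X.1 ∨ w ∈ Y.1 := Iff.rfl
theorem mem_himp_up (X Y : Up M) (w : W) :
    w ∈ (X ⇨ Y).1 ↔ ∀ ⦃w'⦄, M.R w w' → w' ∈ X.1 → w' ∈ Y.1 := Iff.rfl
theorem mem_top_up (w : W) : w ∈ (⊤ : Up M).1 := trivial
theorem not_mem_bot_up (w : W) : w ∉ (⊥ : Up M).1 := fun h => h.elim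
theorem mem_compl_up (X : Up M) (w : W) :
    w ∈ (Xᶜ : Up M).1 ↔ ∀ ⦃w'⦄, M.R w w' → w' ∉ X.1 := by
  constructor
  · intro h w' hw' hX; exact (h hw' hX).elim
  · intro h w' hw' hX; exact (h hw' hX).elim

/-- the operations S i on hereditary sets -/
def SUp (i : Fin 2) (X : Up M) : Up M :=
  ⟨M.s i ⁻¹' X.1, fun w w' hww' hw => X.2 (M.K5 i w w' hww').1 hw⟩

def UpHT : HTAlgebra (Up M) where
  S := SUp M
  S_inf i X Y := rfl
  S_sup i X Y := rfl
  S_S i j X := by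
    apply Subtype.ext
    ext w
    show M.s j (M.s i w) ∈ X.1 ↔ M.s j w ∈ X.1
    rw [M.s_s i j w]
  S1_sup_self X := by
    apply le_antisymm
    · intro w hw
      rcases (mem_sup_up M _ _ w).1 hw with h | h
      · exact X.2 (M.K3 w) h
      · exact h
    · intro w hw
      exact (mem_sup_up M _ _ w).2 (Or.inr hw)
  S2_himp X Y := by
    apply Subtype.ext
    ext w
    constructor
    · -- S₂(X ⇨ Y) ⊆ S₂X ⇨ S₂Y
      intro hw w' hww' hX
      exact hw ((M.K5 1 w w' hww').1) hX
    · -- S₂X ⇨ S₂Y ⊆ S₂(X ⇨ Y)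
      intro hw u hu hX
      -- hw : ∀ w', R w w' → s₂w' ∈ X → s₂w' ∈ Y ; hu : R (s₂ w) u ; hX : u ∈ X
      have h1 : M.s 1 u ∈ X.1 := X.2 (M.K4 u) hX
      have h2 : M.R (M.s 1 u) (M.s 1 w) := by
        have := (M.K5 1 (M.s 1 w) u hu).2
        rwa [M.s_s 1 1 w] at this
      have h3 : M.s 1 w ∈ X.1 := X.2 h2 h1
      have h4 : M.s 1 w ∈ Y.1 := hw (M.refl w) h3
      exact Y.2 hu h4
  S1_himp X Y := by
    apply Subtype.ext
    ext w
    constructor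
    · intro hw
      refine ⟨?_, ?_⟩
      · intro w' hww' hX
        exact hw ((M.K5 0 w w' hww').1) hX
      · intro w' hww' hX
        have : M.R (M.s 0 w) (M.s 1 w') :=
          M.trans _ _ _ (M.K3 w) (M.trans _ _ _ hww' (M.K4 w'))
        exact hw this hX
    · rintro ⟨h1, h2⟩ u hu hX
      -- hu : R (s₁ w) u, hX : u ∈ X, want u ∈ Y
      rcases M.K6 u with ⟨i, u', hu'⟩
      fin_cases i
      · -- u = s₁ u', so s₁ u = u
        have hfix : M.s 0 u = u := by rw [hu']; exact M.s_s _ 0 u'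
        have ha : M.R w (M.s 1 u) := by
          have hb := (M.K5 1 (M.s 0 w) u hu).1
          rw [M.s_s 0 1 w] at hb
          exact M.trans _ _ _ (M.K4 w) hb
        have hc : M.s 0 (M.s 1 u) ∈ X.1 := by
          rw [M.s_s 1 0, hfix]; exact hX
        have hd : M.s 0 (M.s 1 u) ∈ Y.1 := h1 ha hc
        rw [M.s_s 1 0, hfix] at hd
        exact hd
      · -- u = s₂ u', so s₂ u = u
        have hfix : M.s 1 u = u := by rw [hu']; exact M.s_s _ 1 u'
        have hb := (M.K5 1 (M.s 0 w) u hu).2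
        rw [M.s_s 0 1 w] at hb
        -- hb : R (s₂ u) (s₂ w), i.e. R u (s₂ w)
        rw [hfix] at hb
        have hc : M.s 1 w ∈ X.1 := X.2 hb hX
        have hd : M.s 1 w ∈ Y.1 := h2 (M.refl w) hc
        have he := (M.K5 1 (M.s 0 w) u hu).1
        rw [M.s_s 0 1 w, hfix] at he
        exact Y.2 he hd
  S1_lem X := by
    apply le_antisymm (le_top)
    intro w _
    by_cases hc : M.s 0 w ∈ X.1
    · exact (mem_sup_up M _ _ w).2 (Or.inl hc)
    · refine (mem_sup_up M _ _ w).2 (Or.inr ?_)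
      rw [mem_compl_up]
      intro w' hww' hX
      exact hc (X.2 (M.K5 0 w w' hww').2 hX)

/-- interpretation of formulas as hereditary sets -/
def hUp : Fml → Up M
  | .var p => ⟨M.m p, fun w w' h hw => M.her_at p w w' h hw⟩
  | .and a b => hUp a ⊓ hUp b
  | .or a b => hUp a ⊔ hUp b
  | .imp a b => hUp a ⇨ hUp b
  | .neg a => (hUp a)ᶜ
  | .S i a => (UpHT M).S i (hUp a)

theorem hUp_isHom : IsHom (UpHT M) (hUp M) :=
  ⟨fun _ _ => rfl, fun _ _ => rfl, fun _ _ => rfl, fun _ => rfl, fun _ _ => rfl⟩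

theorem hUp_truth : ∀ (β : Fml) (w : W), w ∈ (hUp M β).1 ↔ Sat M β w := by
  intro β
  induction β with
  | var p => intro w; exact Iff.rfl
  | and a b iha ihb =>
    intro w
    show (w ∈ (hUp M a).1 ∧ w ∈ (hUp M b).1) ↔ _
    rw [iha, ihb]; exact Iff.rfl
  | or a b iha ihb =>
    intro w
    show (w ∈ (hUp M a).1 ∨ w ∈ (hUp M b).1) ↔ _
    rw [iha, ihb]; exact Iff.rfl
  | imp a b iha ihb =>
    intro w
    show (∀ ⦃w'⦄, M.R w w' → w' ∈ (hUp M a).1 → w' ∈ (hUp M b).1) ↔ _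
    show _ ↔ (∀ w', M.R w w' → Sat M a w' → Sat M b w')
    constructor
    · intro h w' hr hs; exact (ihb w').1 (h hr ((iha w').2 hs))
    · intro h w' hr hs; exact (ihb w').2 (h w' hr ((iha w').1 hs))
  | neg a iha =>
    intro w
    rw [show hUp M (.neg a) = (hUp M a)ᶜ from rfl, mem_compl_up]
    show _ ↔ (∀ w', M.R w w' → ¬ Sat M a w')
    constructor
    · intro h w' hr hs; exact h hr ((iha w').2 hs)
    · intro h w' hr hs; exact h w' hr ((iha w').1 hs)
  | S i a iha =>
    intro w
    show M.s i w ∈ (hUp M a).1 ↔ Sat M a (M.s i w)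
    exact iha _

end UpSets

/-- Theorem 5.6: a formula is HT-valid (true in every HT-model) iff it is
algebraically valid (h(α) = 1 in every algebraic model). -/
theorem stmt_17 (α : Fml) :
    (∀ (W : Type) (_ : Nonempty W) (M : HTModel W) (w : W), Sat M α w) ↔
    (∀ (A : Type) (_ : HeytingAlgebra A) (H : HTAlgebra A) (h : Fml → A),
      IsHom H h → h α = ⊤) := by
  constructor
  · -- HT-valid → algebraically valid
    intro hval A hA H h hh
    by_contra hne
    -- separate h α from the filter {⊤}
    have hsep := exists_pf (A := A) {x | x = ⊤} rfl
      (fun a b ha hb => show a ⊓ b = ⊤ by rw [show a = ⊤ from ha, show b = ⊤ from hb, inf_top_eq])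
      (fun a b hab ha => show b = ⊤ from le_antisymm le_top ((show a = ⊤ from ha) ▸ hab))
      (h α) (fun hmem => hne hmem)
    obtain ⟨G, hG, _, hαG⟩ := hsep
    have hsat := hval {F : Set A // IsPF F} ⟨⟨G, hG⟩⟩ (canModel H h) ⟨G, hG⟩
    rw [can_truth H h hh α ⟨G, hG⟩] at hsat
    exact hαG hsat
  · -- algebraically valid → HT-valid
    intro halg W _ M w
    have h := halg (Up M) (upHeyting M) (UpHT M) (hUp M) (hUp_isHom M)
    have hw : w ∈ (hUp M α).1 := by rw [h]; exact mem_top_up M w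
    exact (hUp_truth M α w).1 hw
end
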